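/- arXiv:1901.01018 — 4 statements merged into one kernel-verified Lean document; each statement's English description precedes it below -/
import Mathlib

section
/- Let G, U ⊆ ℝ^d be open, g : G → U a diffeomorphism with a ≤ |det g'| ≤ b on G for positive constants a, b, and let 𝒩 be a Young function. Then for every Bochner measurable f : g[G] → X one has min{a,1}·‖f∘g‖_{L^𝒩(G;X)} ≤ ‖f‖_{L^𝒩(g[G];X)} ≤ max{b,1}·‖f∘g‖_{L^𝒩(G;X)}. -/
open MeasureTheory ENNReal Filter Set

/-- The Luxemburg norm of `f` with respect to the Young function `N` and measure `μ`. -/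
noncomputable def luxNorm {U X : Type*} [MeasurableSpace U] [NormedAddCommGroup X]
    (N : ℝ → ℝ) (μ : Measure U) (f : U → X) : ℝ≥0∞ :=
  ⨅ (l : ℝ) (_ : 0 < l ∧ ∫⁻ u, ENNReal.ofReal (N (‖f u‖ / l)) ∂μ ≤ 1),
    ENNReal.ofReal l

/-- Convexity bound: for `c ≥ 1` and `t ≥ 0`, `N (t / c) ≤ N t / c`. -/
lemma young_div_le {N : ℝ → ℝ} (hN0 : N 0 = 0) (hconv : ConvexOn ℝ (Ici 0) N)
    {t c : ℝ} (ht : 0 ≤ t) (hc : 1 ≤ c) : N (t / c) ≤ N t / c := by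
  have hc0 : 0 < c := lt_of_lt_of_le one_pos hc
  have h1 : (0:ℝ) ≤ 1 / c := by positivity
  have h2 : (0:ℝ) ≤ 1 - 1 / c := by
    have : 1 / c ≤ 1 := by rw [div_le_one hc0]; exact hc
    linarith
  have := hconv.2 (mem_Ici.2 ht) (mem_Ici.2 (le_refl (0:ℝ))) h1 h2 (by ring)
  simp only [smul_eq_mul, mul_zero, add_zero, hN0] at this
  calc N (t / c) = N (1 / c * t) := by rw [one_div, inv_mul_eq_div]
    _ ≤ 1 / c * N t := this
    _ = N t / c := by rw [one_div, inv_mul_eq_div]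

/-- Scaling of Orlicz (Luxemburg) norms under a diffeomorphism `g : G → g[G]` with
`a ≤ |det g'| ≤ b`:
`min{a,1} ‖f ∘ g‖_{L^N(G)} ≤ ‖f‖_{L^N(g[G])} ≤ max{b,1} ‖f ∘ g‖_{L^N(G)}`. -/
theorem stmt1 {d : ℕ} {X : Type*} [NormedAddCommGroup X]
    (G : Set (EuclideanSpace ℝ (Fin d))) (hG : IsOpen G)
    (g : EuclideanSpace ℝ (Fin d) → EuclideanSpace ℝ (Fin d))
    (hU : IsOpen (g '' G)) (hginj : Set.InjOn g G)
    (g' : EuclideanSpace ℝ (Fin d) → (EuclideanSpace ℝ (Fin d) →L[ℝ] EuclideanSpace ℝ (Fin d)))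
    (hg' : ∀ x ∈ G, HasFDerivAt g (g' x) x)
    (hginv : ContinuousOn (Function.invFunOn g G) (g '' G))
    (a b : ℝ) (ha : 0 < a) (hb : 0 < b)
    (hdet : ∀ x ∈ G, a ≤ |(g' x).det| ∧ |(g' x).det| ≤ b)
    (N : ℝ → ℝ)
    (hN0 : N 0 = 0) (hmono : MonotoneOn N (Ici 0)) (hconv : ConvexOn ℝ (Ici 0) N)
    (hnonneg : ∀ x ∈ Ici (0:ℝ), 0 ≤ N x) (htop : Tendsto N atTop atTop)
    (f : EuclideanSpace ℝ (Fin d) → X) (hf : AEStronglyMeasurable f (volume.restrict (g '' G))) :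
    ENNReal.ofReal (min a 1) * luxNorm N (volume.restrict G) (f ∘ g) ≤
      luxNorm N (volume.restrict (g '' G)) f ∧
    luxNorm N (volume.restrict (g '' G)) f ≤
      ENNReal.ofReal (max b 1) * luxNorm N (volume.restrict G) (f ∘ g) := by
  set I₁ : ℝ → ℝ≥0∞ := fun l => ∫⁻ x in G, ENNReal.ofReal (N (‖f (g x)‖ / l)) with hI₁
  set I₂ : ℝ → ℝ≥0∞ := fun l => ∫⁻ x in g '' G, ENNReal.ofReal (N (‖f x‖ / l)) with hI₂
  -- change of variables
  have key : ∀ l : ℝ,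
      I₂ l = ∫⁻ x in G, ENNReal.ofReal |(g' x).det| * ENNReal.ofReal (N (‖f (g x)‖ / l)) :=
    fun l => lintegral_image_eq_lintegral_abs_det_fderiv_mul volume hG.measurableSet
      (fun x hx => (hg' x hx).hasFDerivWithinAt) hginj _
  have keylow : ∀ l : ℝ, ENNReal.ofReal a * I₁ l ≤ I₂ l := by
    intro l
    rw [key l, hI₁]
    simp only []
    rw [← lintegral_const_mul' _ _ ENNReal.ofReal_ne_top]
    refine lintegral_mono_ae ((ae_restrict_iff' hG.measurableSet).2
      (Eventually.of_forall fun x hx => ?_))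
    exact mul_le_mul_left (ENNReal.ofReal_le_ofReal (hdet x hx).1) _
  have keyhigh : ∀ l : ℝ, I₂ l ≤ ENNReal.ofReal b * I₁ l := by
    intro l
    rw [key l, hI₁]
    simp only []
    rw [← lintegral_const_mul' _ _ ENNReal.ofReal_ne_top]
    refine lintegral_mono_ae ((ae_restrict_iff' hG.measurableSet).2
      (Eventually.of_forall fun x hx => ?_))
    exact mul_le_mul_left (ENNReal.ofReal_le_ofReal (hdet x hx).2) _
  have hlux1 : luxNorm N (volume.restrict G) (f ∘ g) = ⨅ (l : ℝ) (_ : 0 < l ∧ I₁ l ≤ 1),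
      ENNReal.ofReal l := rfl
  have hlux2 : luxNorm N (volume.restrict (g '' G)) f = ⨅ (l : ℝ) (_ : 0 < l ∧ I₂ l ≤ 1),
      ENNReal.ofReal l := rfl
  constructor
  · -- lower bound
    set m := min a 1 with hm
    have hm0 : 0 < m := lt_min ha one_pos
    have hm1 : m ≤ 1 := min_le_right _ _
    have hma : m ≤ a := min_le_left _ _
    rw [hlux2]
    refine le_iInf fun l => le_iInf fun hl => ?_
    obtain ⟨hl0, hl1⟩ := hl
    have hstep : luxNorm N (volume.restrict G) (f ∘ g) ≤ ENNReal.ofReal (l / m) := by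
      rw [hlux1]
      refine iInf_le_of_le (l / m) (iInf_le_of_le ⟨by positivity, ?_⟩ le_rfl)
      -- show I₁ (l / m) ≤ 1
      have hIlm : I₁ (l / m) ≤ ENNReal.ofReal m * I₁ l := by
        rw [hI₁]
        simp only []
        rw [← lintegral_const_mul' _ _ ENNReal.ofReal_ne_top]
        refine lintegral_mono fun x => ?_
        have ht : (0:ℝ) ≤ ‖f (g x)‖ / l := by positivity
        have hinv : 1 ≤ 1 / m := by rw [le_div_iff₀ hm0]; simpa using hm1
        have heq : ‖f (g x)‖ / (l / m) = (‖f (g x)‖ / l) / (1 / m) := by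
          field_simp
        rw [heq]
        calc ENNReal.ofReal (N (‖f (g x)‖ / l / (1 / m)))
            ≤ ENNReal.ofReal (N (‖f (g x)‖ / l) / (1 / m)) :=
              ENNReal.ofReal_le_ofReal (young_div_le hN0 hconv ht hinv)
          _ = ENNReal.ofReal m * ENNReal.ofReal (N (‖f (g x)‖ / l)) := by
              rw [div_div_eq_mul_div, div_one, mul_comm, ENNReal.ofReal_mul hm0.le, mul_comm]
      have hI1 : I₁ l ≤ (ENNReal.ofReal a)⁻¹ := by
        rw [ENNReal.le_inv_iff_mul_le, mul_comm]
        exact (keylow l).trans hl1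
      calc I₁ (l / m) ≤ ENNReal.ofReal m * I₁ l := hIlm
        _ ≤ ENNReal.ofReal m * (ENNReal.ofReal a)⁻¹ := mul_le_mul_right hI1 _
        _ = ENNReal.ofReal m / ENNReal.ofReal a := rfl
        _ ≤ 1 := ENNReal.div_le_of_le_mul (by simpa using ENNReal.ofReal_le_ofReal hma)
    calc ENNReal.ofReal m * luxNorm N (volume.restrict G) (f ∘ g)
        ≤ ENNReal.ofReal m * ENNReal.ofReal (l / m) := mul_le_mul_right hstep _
      _ = ENNReal.ofReal (m * (l / m)) := (ENNReal.ofReal_mul hm0.le).symm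
      _ = ENNReal.ofReal l := by rw [mul_div_cancel₀ _ hm0.ne']
  · -- upper bound
    set c := max b 1 with hc
    have hc1 : (1:ℝ) ≤ c := le_max_right _ _
    have hc0 : 0 < c := lt_of_lt_of_le one_pos hc1
    have hbc : b ≤ c := le_max_left _ _
    have hne0 : ENNReal.ofReal c ≠ 0 := by simp [ENNReal.ofReal_eq_zero, not_le, hc0]
    rw [hlux1, hlux2, ENNReal.mul_iInf_of_ne hne0 ENNReal.ofReal_ne_top]
    simp only [ENNReal.mul_iInf_of_ne hne0 ENNReal.ofReal_ne_top]
    refine le_iInf fun l => le_iInf fun hl => ?_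
    obtain ⟨hl0, hl1⟩ := hl
    refine iInf_le_of_le (c * l) (iInf_le_of_le ⟨by positivity, ?_⟩ ?_)
    · -- I₂ (c * l) ≤ 1
      have hIcl : I₁ (c * l) ≤ (ENNReal.ofReal c)⁻¹ * I₁ l := by
        rw [hI₁]
        simp only []
        rw [← lintegral_const_mul' _ _ (ENNReal.inv_ne_top.2 hne0)]
        refine lintegral_mono fun x => ?_
        have ht : (0:ℝ) ≤ ‖f (g x)‖ / l := by positivity
        have heq : ‖f (g x)‖ / (c * l) = (‖f (g x)‖ / l) / c := by
          rw [div_div, mul_comm]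
        rw [heq]
        calc ENNReal.ofReal (N (‖f (g x)‖ / l / c))
            ≤ ENNReal.ofReal (N (‖f (g x)‖ / l) / c) :=
              ENNReal.ofReal_le_ofReal (young_div_le hN0 hconv ht hc1)
          _ = (ENNReal.ofReal c)⁻¹ * ENNReal.ofReal (N (‖f (g x)‖ / l)) := by
              rw [ENNReal.ofReal_div_of_pos hc0, div_eq_mul_inv, mul_comm]
      calc I₂ (c * l) ≤ ENNReal.ofReal b * I₁ (c * l) := keyhigh _
        _ ≤ ENNReal.ofReal b * ((ENNReal.ofReal c)⁻¹ * I₁ l) := mul_le_mul_right hIcl _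
        _ = (ENNReal.ofReal b / ENNReal.ofReal c) * I₁ l := by
            rw [div_eq_mul_inv, mul_assoc]
        _ ≤ 1 * 1 := mul_le_mul'
            (ENNReal.div_le_of_le_mul (by simpa using ENNReal.ofReal_le_ofReal hbc)) hl1
        _ = 1 := one_mul 1
    · rw [← ENNReal.ofReal_mul hc0.le]
end

section
/- Let κ > 0, p ∈ [1,∞), and N(t) = t^p·log^{p/2}(t+1). If A and B are nonnegative random variables satisfying ℙ(A ≥ x, B ≤ y) ≤ 2·exp(−κ y^{−2} x²) for all x, y > 0, then ‖A‖_{L^p(Ω)} ≤ 10·p^{1/2}·κ^{−1/2}·‖B‖_{L^N(Ω)}, where ‖·‖_{L^N} denotes the Luxemburg norm for the Young function N. -/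
open MeasureTheory ENNReal Filter Set

private lemma rpow_triple_add {a b c p : ℝ} (ha : 0 ≤ a) (hb : 0 ≤ b) (hc : 0 ≤ c)
    (hp : 1 ≤ p) : a ^ p + b ^ p + c ^ p ≤ (a + b + c) ^ p := by
  have hp0 : (0:ℝ) < p := lt_of_lt_of_le one_pos hp
  have hs : 0 ≤ a + b + c := by linarith
  rcases eq_or_lt_of_le hs with h | h
  · have ha0 : a = 0 := by linarith
    have hb0 : b = 0 := by linarith
    have hc0 : c = 0 := by linarith
    simp [ha0, hb0, hc0, Real.zero_rpow hp0.ne']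
  · have key : ∀ x : ℝ, 0 ≤ x → x ≤ a + b + c → x ^ p ≤ x * (a + b + c) ^ (p - 1) := by
      intro x hx hxs
      rcases eq_or_lt_of_le hx with h0 | h0
      · simp [← h0, Real.zero_rpow hp0.ne']
      · have hxp : x ^ p = x * x ^ (p - 1) := by
          rw [show p = 1 + (p - 1) by ring, Real.rpow_add h0, Real.rpow_one]
          ring_nf
        rw [hxp]
        exact mul_le_mul_of_nonneg_left (Real.rpow_le_rpow h0.le hxs (by linarith)) hx
    have hsum : (a + b + c) ^ p = (a + b + c) * (a + b + c) ^ (p - 1) := by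
      rw [show p = 1 + (p - 1) by ring, Real.rpow_add h, Real.rpow_one]
      ring_nf
    calc a ^ p + b ^ p + c ^ p
        ≤ a * (a+b+c) ^ (p-1) + b * (a+b+c) ^ (p-1) + c * (a+b+c) ^ (p-1) := by
          gcongr <;> [exact key a ha (by linarith); exact key b hb (by linarith);
            exact key c hc (by linarith)]
      _ = (a + b + c) * (a+b+c) ^ (p-1) := by ring
      _ = (a + b + c) ^ p := hsum.symm

private lemma numeric_bound {p : ℝ} (hp : 1 ≤ p) :
    16/5 * Real.exp (-(4*p)) + (2:ℝ) ^ (p/2) + (3:ℝ) ^ (p/2) ≤ (3.5:ℝ) ^ p := by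
  have hp0 : (0:ℝ) < p := lt_of_lt_of_le one_pos hp
  have h2 : (2:ℝ) ^ (p/2) = (Real.sqrt 2) ^ p := by
    rw [Real.sqrt_eq_rpow, ← Real.rpow_mul (by norm_num : (0:ℝ) ≤ 2)]
    congr 1; ring
  have h3 : (3:ℝ) ^ (p/2) = (Real.sqrt 3) ^ p := by
    rw [Real.sqrt_eq_rpow, ← Real.rpow_mul (by norm_num : (0:ℝ) ≤ 3)]
    congr 1; ring
  have hexp : 16/5 * Real.exp (-(4*p)) ≤ (16/5 * Real.exp (-4)) ^ p := by
    have e1 : Real.exp (-(4*p)) = (Real.exp (-4)) ^ p := by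
      rw [← Real.exp_one_rpow (-4), ← Real.rpow_mul (Real.exp_pos 1).le]
      rw [Real.exp_one_rpow]
      ring_nf
    have e2 : (16/5 : ℝ) ≤ (16/5 : ℝ) ^ p := by
      calc (16/5:ℝ) = (16/5:ℝ) ^ (1:ℝ) := (Real.rpow_one _).symm
        _ ≤ (16/5:ℝ) ^ p := Real.rpow_le_rpow_of_exponent_le (by norm_num) hp
    calc 16/5 * Real.exp (-(4*p)) = 16/5 * (Real.exp (-4)) ^ p := by rw [e1]
      _ ≤ (16/5:ℝ) ^ p * (Real.exp (-4)) ^ p := by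
          exact mul_le_mul_of_nonneg_right e2 (Real.rpow_nonneg (Real.exp_pos _).le p)
      _ = (16/5 * Real.exp (-4)) ^ p := (Real.mul_rpow (by norm_num) (Real.exp_pos _).le).symm
  have hs2 : Real.sqrt 2 ≤ 1.415 := Real.sqrt_le_iff.mpr ⟨by norm_num, by norm_num⟩
  have hs3 : Real.sqrt 3 ≤ 1.733 := Real.sqrt_le_iff.mpr ⟨by norm_num, by norm_num⟩
  have hexp4 : Real.exp (-4) ≤ 0.1 := by
    rw [Real.exp_neg]
    have h4 : Real.exp 4 = (Real.exp 1) ^ (4:ℕ) := by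
      rw [← Real.exp_nat_mul]; norm_num
    have hegt : (10:ℝ) ≤ Real.exp 4 := by
      rw [h4]
      have h1 : (2.7182818283:ℝ) ^ (4:ℕ) ≤ (Real.exp 1) ^ (4:ℕ) :=
        pow_le_pow_left₀ (by norm_num) Real.exp_one_gt_d9.le 4
      nlinarith
    have h10 : (0:ℝ) < 10 := by norm_num
    calc (Real.exp 4)⁻¹ ≤ (10:ℝ)⁻¹ := by
          apply inv_anti₀ h10 hegt
      _ ≤ 0.1 := by norm_num
  have htri := rpow_triple_add (a := 16/5 * Real.exp (-4)) (b := Real.sqrt 2)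
    (c := Real.sqrt 3) (by positivity) (Real.sqrt_nonneg _) (Real.sqrt_nonneg _) hp
  have hbase : 16/5 * Real.exp (-4) + Real.sqrt 2 + Real.sqrt 3 ≤ 3.5 := by nlinarith
  calc 16/5 * Real.exp (-(4*p)) + (2:ℝ) ^ (p/2) + (3:ℝ) ^ (p/2)
      ≤ (16/5 * Real.exp (-4)) ^ p + (Real.sqrt 2) ^ p + (Real.sqrt 3) ^ p := by
        rw [h2, h3]; gcongr
    _ ≤ (16/5 * Real.exp (-4) + Real.sqrt 2 + Real.sqrt 3) ^ p := htri
    _ ≤ (3.5:ℝ) ^ p := Real.rpow_le_rpow (by positivity) hbase hp0.le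

set_option maxHeartbeats 2000000 in
private lemma core_bound {Ω : Type*} [MeasurableSpace Ω] (P : Measure Ω) [IsProbabilityMeasure P]
    (κ : ℝ) (hκ : 0 < κ) (p : ℝ) (hp : 1 ≤ p)
    (A B : Ω → ℝ) (hA : Measurable A) (hB : Measurable B)
    (hAnn : ∀ ω, 0 ≤ A ω) (hBnn : ∀ ω, 0 ≤ B ω)
    (htail : ∀ x > (0:ℝ), ∀ y > (0:ℝ),
      P {ω | x ≤ A ω ∧ B ω ≤ y} ≤ ENNReal.ofReal (2 * Real.exp (-κ * x ^ 2 / y ^ 2)))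
    (hN : ∫⁻ ω, ENNReal.ofReal ((B ω) ^ p * Real.log (B ω + 1) ^ (p/2)) ∂P ≤ 1) :
    ∫⁻ ω, ENNReal.ofReal (A ω ^ p) ∂P
      ≤ ENNReal.ofReal ((7 * Real.sqrt p / Real.sqrt κ) ^ p) := by
  have hp0 : (0:ℝ) < p := lt_of_lt_of_le one_pos hp
  have hsp : 0 < Real.sqrt p := Real.sqrt_pos.mpr hp0
  have hsκ : 0 < Real.sqrt κ := Real.sqrt_pos.mpr hκ
  set D : ℝ := 2 * Real.sqrt p / Real.sqrt κ with hD_def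
  have hD : 0 < D := by positivity
  have hD2 : D ^ (2:ℕ) = 4 * p / κ := by
    rw [hD_def, div_pow, mul_pow, Real.sq_sqrt hp0.le, Real.sq_sqrt hκ.le]
    norm_num
  set s : ℝ → ℝ := fun b => Real.sqrt (Real.log (b + 1) + 1) with hs_def
  have hlognn : ∀ b : ℝ, 0 ≤ b → 0 ≤ Real.log (b + 1) :=
    fun b hb => Real.log_nonneg (by linarith)
  have hs1 : ∀ b : ℝ, 0 ≤ b → 1 ≤ s b := by
    intro b hb
    have h := hlognn b hb
    calc (1:ℝ) = Real.sqrt 1 := Real.sqrt_one.symm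
      _ ≤ s b := Real.sqrt_le_sqrt (by linarith)
  have hs_nn : ∀ b : ℝ, 0 ≤ s b := fun b => Real.sqrt_nonneg _
  have hs_mono : ∀ a b : ℝ, 0 ≤ a → a ≤ b → s a ≤ s b := by
    intro a b ha hab
    have hl : Real.log (a + 1) ≤ Real.log (b + 1) :=
      Real.log_le_log (x := a + 1) (y := b + 1) (by linarith) (by linarith)
    exact Real.sqrt_le_sqrt (by linarith)
  set φ : ℝ → ℝ := fun b => D * (b * s b) with hφ_def
  have hφ0 : φ 0 = 0 := by simp [hφ_def]
  have hφnn : ∀ b : ℝ, 0 ≤ b → 0 ≤ φ b := by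
    intro b hb
    exact mul_nonneg hD.le (mul_nonneg hb (hs_nn b))
  have hφ_strict : ∀ a b : ℝ, 0 ≤ a → a < b → φ a < φ b := by
    intro a b ha hab
    have h1 : s a ≤ s b := hs_mono a b ha hab.le
    have h2 : 1 ≤ s b := hs1 b (ha.trans hab.le)
    have h3 : a * s a ≤ a * s b := mul_le_mul_of_nonneg_left h1 ha
    have h4 : a * s b < b * s b := mul_lt_mul_of_pos_right hab (lt_of_lt_of_le one_pos h2)
    exact mul_lt_mul_of_pos_left (lt_of_le_of_lt h3 h4) hD
  have hinv : ∀ t : ℝ, 0 < t → ∃ u : ℝ, 0 < u ∧ φ u = t := by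
    intro t ht
    have hMnn : (0:ℝ) ≤ t / D := by positivity
    have hcont : ContinuousOn φ (Icc 0 (t / D)) := by
      apply continuousOn_const.mul
      apply continuousOn_id.mul
      apply ContinuousOn.sqrt
      apply ContinuousOn.add _ continuousOn_const
      apply ContinuousOn.log (continuousOn_id.add continuousOn_const)
      intro x hx
      have h1 := hx.1
      intro hc
      simp only [Pi.add_apply, id_eq] at hc
      linarith
    have hval : t ≤ φ (t / D) := by
      have h1 : 1 ≤ s (t / D) := hs1 _ hMnn
      calc t = D * ((t / D) * 1) := by field_simp
        _ ≤ D * ((t / D) * s (t / D)) := by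
            apply mul_le_mul_of_nonneg_left _ hD.le
            exact mul_le_mul_of_nonneg_left h1 hMnn
    have hmem : t ∈ Icc (φ 0) (φ (t / D)) := ⟨by rw [hφ0]; exact ht.le, hval⟩
    obtain ⟨u, hu_mem, hu⟩ := intermediate_value_Icc hMnn hcont hmem
    refine ⟨u, ?_, hu⟩
    rcases eq_or_lt_of_le hu_mem.1 with h0 | h0
    · exfalso
      rw [← h0, hφ0] at hu
      exact ht.ne hu
    · exact h0
  have LA := lintegral_rpow_eq_lintegral_meas_le_mul P (ae_of_all _ hAnn) hA.aemeasurable hp0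
  have hφm : Measurable φ := by
    apply measurable_const.mul
    exact measurable_id.mul ((((measurable_id.add_const 1).log).add_const 1).sqrt)
  have hφBm : Measurable fun ω => φ (B ω) := hφm.comp hB
  have LB := lintegral_rpow_eq_lintegral_meas_le_mul P
    (ae_of_all _ fun ω => hφnn _ (hBnn ω)) hφBm.aemeasurable hp0
  set e : ℝ := -(8 * p) / 3 with he_def
  have he_neg : e ≤ 0 := by rw [he_def]; nlinarith
  set g : ℝ → ℝ≥0∞ :=
    fun t => ENNReal.ofReal (2 * Real.exp (-(4 * p)) * min 1 ((t / D) ^ e)) with hg_def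
  have key : ∀ t ∈ Ioi (0:ℝ), P {a | t ≤ A a} ≤ g t + P {a | t ≤ φ (B a)} := by
    intro t ht
    rw [mem_Ioi] at ht
    obtain ⟨u, hu, hφu⟩ := hinv t ht
    have hsub : {a | t ≤ A a} ⊆ {ω | t ≤ A ω ∧ B ω ≤ u} ∪ {a | t ≤ φ (B a)} := by
      intro a ha
      by_cases hc : B a ≤ u
      · exact Or.inl ⟨ha, hc⟩
      · right
        have h1 := hφ_strict u (B a) hu.le (lt_of_not_ge hc)
        rw [hφu] at h1
        exact h1.le
    refine le_trans (measure_mono hsub) (le_trans (measure_union_le _ _) ?_)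
    refine add_le_add_left (le_trans (htail t ht u hu) ?_) _
    apply ENNReal.ofReal_le_ofReal
    have hu1 : (0:ℝ) < u + 1 := by linarith
    have hsu : (s u) ^ (2:ℕ) = Real.log (u + 1) + 1 :=
      Real.sq_sqrt (by have := hlognn u hu.le; linarith)
    have ht2 : t ^ (2:ℕ) = D ^ (2:ℕ) * u ^ (2:ℕ) * (Real.log (u + 1) + 1) := by
      rw [← hφu, hφ_def, ← hsu]; ring
    have harg : -κ * t ^ 2 / u ^ 2 = -(4 * p) * (Real.log (u + 1) + 1) := by
      rw [ht2, hD2]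
      field_simp
    have hexp_eq : Real.exp (-κ * t ^ 2 / u ^ 2)
        = Real.exp (-(4 * p)) * (u + 1) ^ (-(4 * p)) := by
      rw [harg, Real.rpow_def_of_pos hu1, ← Real.exp_add]
      congr 1
      ring
    have hle1 : (u + 1) ^ (-(4 * p)) ≤ 1 :=
      Real.rpow_le_one_of_one_le_of_nonpos (by linarith) (by linarith)
    have hle2 : (u + 1) ^ (-(4 * p)) ≤ (t / D) ^ e := by
      have htD : t / D = u * s u := by
        rw [← hφu, hφ_def]
        field_simp
      have h32 : u * s u ≤ (u + 1) ^ ((3:ℝ)/2) := by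
        have h1 : s u ≤ Real.sqrt (u + 1) := Real.sqrt_le_sqrt
          (by have := Real.log_le_sub_one_of_pos hu1; linarith)
        have h2 : u * s u ≤ (u + 1) * Real.sqrt (u + 1) :=
          mul_le_mul (by linarith) h1 (hs_nn u) (by linarith)
        have h3 : (u + 1) * Real.sqrt (u + 1) = (u + 1) ^ ((3:ℝ)/2) := by
          rw [Real.sqrt_eq_rpow, show ((3:ℝ)/2) = 1 + 1/2 by norm_num,
            Real.rpow_add hu1, Real.rpow_one]
        linarith
      have htDpos : 0 < t / D := by positivity
      have h4 : ((u + 1) ^ ((3:ℝ)/2)) ^ e ≤ (t / D) ^ e := by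
        rw [htD]
        exact Real.rpow_le_rpow_of_nonpos (htD ▸ htDpos) h32 he_neg
      have h5 : ((u + 1) ^ ((3:ℝ)/2)) ^ e = (u + 1) ^ (-(4 * p)) := by
        rw [← Real.rpow_mul (by linarith : (0:ℝ) ≤ u + 1)]
        congr 1
        rw [he_def]; ring
      linarith [h4, h5.symm.le]
    have hmin : (u + 1) ^ (-(4 * p)) ≤ min 1 ((t / D) ^ e) := le_min hle1 hle2
    calc 2 * Real.exp (-κ * t ^ 2 / u ^ 2)
        = 2 * Real.exp (-(4 * p)) * (u + 1) ^ (-(4 * p)) := by rw [hexp_eq]; ring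
      _ ≤ 2 * Real.exp (-(4 * p)) * min 1 ((t / D) ^ e) :=
          mul_le_mul_of_nonneg_left hmin (by positivity)
  -- Term I : the Gaussian part
  have hgm : Measurable fun t : ℝ => g t * ENNReal.ofReal (t ^ (p - 1)) := by
    refine Measurable.mul (f := fun t => g t) (g := fun t => ENNReal.ofReal (t ^ (p - 1))) ?_ ?_
    · apply Measurable.ennreal_ofReal
      exact measurable_const.mul (measurable_const.min
        ((measurable_id.div_const D).pow measurable_const))
    · exact (measurable_id.pow measurable_const).ennreal_ofReal
  have grw : ∀ t : ℝ, t ∈ Ioi (0:ℝ) → g t * ENNReal.ofReal (t ^ (p - 1))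
      = ENNReal.ofReal (2 * Real.exp (-(4 * p)))
        * ENNReal.ofReal (min 1 ((t / D) ^ e) * t ^ (p - 1)) := by
    intro t ht
    rw [mem_Ioi] at ht
    have hmin_nn : 0 ≤ min 1 ((t / D) ^ e) :=
      le_min zero_le_one (Real.rpow_nonneg (by positivity) _)
    show ENNReal.ofReal (2 * Real.exp (-(4 * p)) * min 1 ((t / D) ^ e))
        * ENNReal.ofReal (t ^ (p - 1)) = _
    rw [← ENNReal.ofReal_mul (by positivity : (0:ℝ) ≤ 2 * Real.exp (-(4 * p)) * min 1 ((t / D) ^ e)),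
      ← ENNReal.ofReal_mul (by positivity : (0:ℝ) ≤ 2 * Real.exp (-(4 * p)))]
    congr 1
    ring
  have hIoc : ∫⁻ t in Ioc 0 D, ENNReal.ofReal (min 1 ((t / D) ^ e) * t ^ (p - 1))
      ≤ ENNReal.ofReal (D ^ p / p) := by
    have hmono : ∀ t ∈ Ioc (0:ℝ) D,
        ENNReal.ofReal (min 1 ((t / D) ^ e) * t ^ (p - 1)) ≤ ENNReal.ofReal (t ^ (p - 1)) := by
      intro t ht
      apply ENNReal.ofReal_le_ofReal
      have h1 : min 1 ((t / D) ^ e) ≤ 1 := min_le_left _ _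
      have h2 : (0:ℝ) ≤ t ^ (p - 1) := Real.rpow_nonneg ht.1.le _
      nlinarith [le_min zero_le_one (Real.rpow_nonneg (show (0:ℝ) ≤ t / D by
        have := ht.1; positivity) e)]
    have hint : IntegrableOn (fun t : ℝ => t ^ (p - 1)) (Ioc 0 D) := by
      have h := intervalIntegral.intervalIntegrable_rpow' (a := 0) (b := D)
        (show (-1:ℝ) < p - 1 by linarith)
      rwa [intervalIntegrable_iff_integrableOn_Ioc_of_le hD.le] at h
    have hnn : 0 ≤ᵐ[volume.restrict (Ioc (0:ℝ) D)] fun t : ℝ => t ^ (p - 1) := by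
      filter_upwards [ae_restrict_mem measurableSet_Ioc] with t ht
      exact Real.rpow_nonneg ht.1.le _
    calc ∫⁻ t in Ioc 0 D, ENNReal.ofReal (min 1 ((t / D) ^ e) * t ^ (p - 1))
        ≤ ∫⁻ t in Ioc 0 D, ENNReal.ofReal (t ^ (p - 1)) :=
          setLIntegral_mono' measurableSet_Ioc hmono
      _ = ENNReal.ofReal (∫ t in Ioc 0 D, t ^ (p - 1)) :=
          (ofReal_integral_eq_lintegral_ofReal hint hnn).symm
      _ = ENNReal.ofReal (D ^ p / p) := by
          rw [← intervalIntegral.integral_of_le hD.le,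
            integral_rpow (Or.inl (show (-1:ℝ) < p - 1 by linarith))]
          rw [show p - 1 + 1 = p by ring, Real.zero_rpow hp0.ne']
          norm_num
  have hIoi : ∫⁻ t in Ioi D, ENNReal.ofReal (min 1 ((t / D) ^ e) * t ^ (p - 1))
      ≤ ENNReal.ofReal (3 * D ^ p / (5 * p)) := by
    set r : ℝ := e + (p - 1) with hr_def
    have hr : r < -1 := by rw [hr_def, he_def]; nlinarith
    have hpt : ∀ t ∈ Ioi D,
        ENNReal.ofReal (min 1 ((t / D) ^ e) * t ^ (p - 1))
          ≤ ENNReal.ofReal (D ^ (-e) * t ^ r) := by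
      intro t ht
      rw [mem_Ioi] at ht
      have ht0 : 0 < t := hD.trans ht
      apply ENNReal.ofReal_le_ofReal
      have hle : min 1 ((t / D) ^ e) ≤ (t / D) ^ e := min_le_right _ _
      have heq : (t / D) ^ e * t ^ (p - 1) = D ^ (-e) * t ^ r := by
        calc (t / D) ^ e * t ^ (p - 1) = t ^ e / D ^ e * t ^ (p - 1) := by
              rw [Real.div_rpow ht0.le hD.le]
          _ = (D ^ e)⁻¹ * (t ^ e * t ^ (p - 1)) := by ring
          _ = (D ^ e)⁻¹ * t ^ (e + (p - 1)) := by rw [← Real.rpow_add ht0]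
          _ = D ^ (-e) * t ^ r := by rw [Real.rpow_neg hD.le, hr_def]
      calc min 1 ((t / D) ^ e) * t ^ (p - 1) ≤ (t / D) ^ e * t ^ (p - 1) :=
            mul_le_mul_of_nonneg_right hle (Real.rpow_nonneg ht0.le _)
        _ = D ^ (-e) * t ^ r := heq
    have hint2 : IntegrableOn (fun t : ℝ => D ^ (-e) * t ^ r) (Ioi D) :=
      (integrableOn_Ioi_rpow_of_lt hr hD).const_mul _
    have hnn2 : 0 ≤ᵐ[volume.restrict (Ioi D)] fun t : ℝ => D ^ (-e) * t ^ r := by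
      filter_upwards [ae_restrict_mem measurableSet_Ioi] with t ht
      have ht0 : 0 < t := hD.trans ht
      exact mul_nonneg (Real.rpow_nonneg hD.le _) (Real.rpow_nonneg ht0.le _)
    calc ∫⁻ t in Ioi D, ENNReal.ofReal (min 1 ((t / D) ^ e) * t ^ (p - 1))
        ≤ ∫⁻ t in Ioi D, ENNReal.ofReal (D ^ (-e) * t ^ r) :=
          setLIntegral_mono' measurableSet_Ioi hpt
      _ = ENNReal.ofReal (∫ t in Ioi D, D ^ (-e) * t ^ r) :=
          (ofReal_integral_eq_lintegral_ofReal hint2 hnn2).symm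
      _ = ENNReal.ofReal (3 * D ^ p / (5 * p)) := by
          congr 1
          rw [MeasureTheory.integral_const_mul, integral_Ioi_rpow_of_lt hr hD]
          have hr1 : r + 1 = -(5 * p) / 3 := by rw [hr_def, he_def]; ring
          rw [hr1]
          have hDe : D ^ (-e) * D ^ (-(5 * p) / 3) = D ^ p := by
            rw [← Real.rpow_add hD]
            congr 1
            rw [he_def]; ring
          have h5p : (0:ℝ) < 5 * p := by linarith
          field_simp
          rw [neg_div] at hDe
          nlinarith [hDe]
  have termI : ∫⁻ t in Ioi 0, g t * ENNReal.ofReal (t ^ (p - 1))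
      ≤ ENNReal.ofReal (2 * Real.exp (-(4 * p))) * ENNReal.ofReal (8 / 5 * (D ^ p / p)) := by
    have hsplit : ∫⁻ t in Ioi 0, g t * ENNReal.ofReal (t ^ (p - 1))
        = ENNReal.ofReal (2 * Real.exp (-(4 * p)))
          * ∫⁻ t in Ioi 0, ENNReal.ofReal (min 1 ((t / D) ^ e) * t ^ (p - 1)) := by
      rw [← lintegral_const_mul' _ _ ENNReal.ofReal_ne_top]
      exact setLIntegral_congr_fun measurableSet_Ioi grw
    rw [hsplit]
    apply mul_le_mul_right
    rw [← Ioc_union_Ioi_eq_Ioi hD.le,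
      lintegral_union measurableSet_Ioi (Ioc_disjoint_Ioi le_rfl)]
    calc _ ≤ ENNReal.ofReal (D ^ p / p) + ENNReal.ofReal (3 * D ^ p / (5 * p)) :=
          add_le_add hIoc hIoi
      _ = ENNReal.ofReal (8 / 5 * (D ^ p / p)) := by
          rw [← ENNReal.ofReal_add (by positivity) (by positivity)]
          congr 1
          field_simp
          ring
  -- Term II : the Orlicz part
  have termII : ∫⁻ ω, ENNReal.ofReal (φ (B ω) ^ p) ∂P
      ≤ ENNReal.ofReal (D ^ p * (2:ℝ) ^ (p/2) + D ^ p * (3:ℝ) ^ (p/2)) := by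
    have hpt : ∀ ω, ENNReal.ofReal (φ (B ω) ^ p)
        ≤ ENNReal.ofReal (D ^ p * (2:ℝ) ^ (p/2))
          + ENNReal.ofReal (D ^ p * (3:ℝ) ^ (p/2))
            * ENNReal.ofReal ((B ω) ^ p * Real.log (B ω + 1) ^ (p/2)) := by
      intro ω
      have hb : (0:ℝ) ≤ B ω := hBnn ω
      set b : ℝ := B ω with hb_def
      have hlogb : 0 ≤ Real.log (b + 1) := hlognn b hb
      rw [← ENNReal.ofReal_mul (by positivity),
        ← ENNReal.ofReal_add (by positivity) (by positivity)]
      apply ENNReal.ofReal_le_ofReal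
      have hsb : 0 ≤ s b := hs_nn b
      have hφb : φ b ^ p = D ^ p * (b ^ p * (Real.log (b + 1) + 1) ^ (p/2)) := by
        have h1 : φ b = D * (b * s b) := rfl
        have h2 : s b = (Real.log (b + 1) + 1) ^ ((1:ℝ)/2) := by
          show Real.sqrt _ = _
          rw [Real.sqrt_eq_rpow]
        rw [h1, h2, Real.mul_rpow hD.le (by positivity), Real.mul_rpow hb (by positivity),
          ← Real.rpow_mul (by linarith), show (1:ℝ)/2 * p = p/2 by ring]
      rw [hφb]
      have hDp : (0:ℝ) ≤ D ^ p := Real.rpow_nonneg hD.le _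
      rcases le_or_gt b 1 with hb1 | hb1
      · have h1 : b ^ p ≤ 1 := Real.rpow_le_one hb hb1 hp0.le
        have h2 : (Real.log (b + 1) + 1) ^ (p/2) ≤ (2:ℝ) ^ (p/2) := by
          apply Real.rpow_le_rpow (by linarith)
          · have := Real.log_le_sub_one_of_pos (show (0:ℝ) < b + 1 by linarith)
            linarith
          · positivity
        have h0 : (0:ℝ) ≤ (Real.log (b + 1) + 1) ^ (p/2) := Real.rpow_nonneg (by linarith) _
        have hbp : (0:ℝ) ≤ b ^ p := Real.rpow_nonneg hb _
        have hmain : b ^ p * (Real.log (b + 1) + 1) ^ (p/2) ≤ (2:ℝ) ^ (p/2) := by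
          nlinarith
        have hsecond : (0:ℝ) ≤ D ^ p * (3:ℝ) ^ (p/2) * (b ^ p * Real.log (b + 1) ^ (p/2)) := by
          positivity
        nlinarith
      · have hlog2 : (1:ℝ)/2 ≤ Real.log (b + 1) := by
          have h2b : Real.log 2 ≤ Real.log (b + 1) :=
            Real.log_le_log two_pos (by linarith)
          linarith [Real.log_two_gt_d9]
        have h3 : (Real.log (b + 1) + 1) ^ (p/2) ≤ ((3:ℝ) * Real.log (b + 1)) ^ (p/2) :=
          Real.rpow_le_rpow (by linarith) (by linarith) (by positivity)
        have h4 : ((3:ℝ) * Real.log (b + 1)) ^ (p/2)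
            = (3:ℝ) ^ (p/2) * Real.log (b + 1) ^ (p/2) :=
          Real.mul_rpow (by norm_num) (by linarith)
        have hbp : (0:ℝ) ≤ b ^ p := Real.rpow_nonneg hb _
        have hfirst : (0:ℝ) ≤ D ^ p * (2:ℝ) ^ (p/2) := by positivity
        calc D ^ p * (b ^ p * (Real.log (b + 1) + 1) ^ (p/2))
            ≤ D ^ p * (b ^ p * ((3:ℝ) ^ (p/2) * Real.log (b + 1) ^ (p/2))) := by
              apply mul_le_mul_of_nonneg_left _ hDp
              apply mul_le_mul_of_nonneg_left _ hbp
              rw [← h4]; exact h3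
          _ = D ^ p * (3:ℝ) ^ (p/2) * (b ^ p * Real.log (b + 1) ^ (p/2)) := by ring
          _ ≤ D ^ p * (2:ℝ) ^ (p/2) + D ^ p * (3:ℝ) ^ (p/2)
              * (b ^ p * Real.log (b + 1) ^ (p/2)) := le_add_of_nonneg_left hfirst
    calc ∫⁻ ω, ENNReal.ofReal (φ (B ω) ^ p) ∂P
        ≤ ∫⁻ ω, (ENNReal.ofReal (D ^ p * (2:ℝ) ^ (p/2))
            + ENNReal.ofReal (D ^ p * (3:ℝ) ^ (p/2))
              * ENNReal.ofReal ((B ω) ^ p * Real.log (B ω + 1) ^ (p/2))) ∂P :=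
          lintegral_mono hpt
      _ = ENNReal.ofReal (D ^ p * (2:ℝ) ^ (p/2))
          + ENNReal.ofReal (D ^ p * (3:ℝ) ^ (p/2))
            * ∫⁻ ω, ENNReal.ofReal ((B ω) ^ p * Real.log (B ω + 1) ^ (p/2)) ∂P := by
          rw [lintegral_add_left measurable_const, lintegral_const, measure_univ, mul_one,
            lintegral_const_mul' _ _ ENNReal.ofReal_ne_top]
      _ ≤ ENNReal.ofReal (D ^ p * (2:ℝ) ^ (p/2)) + ENNReal.ofReal (D ^ p * (3:ℝ) ^ (p/2)) * 1 := by
          exact add_le_add_right (mul_le_mul_right hN _) _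
      _ = ENNReal.ofReal (D ^ p * (2:ℝ) ^ (p/2) + D ^ p * (3:ℝ) ^ (p/2)) := by
          rw [mul_one, ← ENNReal.ofReal_add (by positivity) (by positivity)]
  -- assemble
  have hsplit2 : ∫⁻ t in Ioi 0, (g t + P {a | t ≤ φ (B a)}) * ENNReal.ofReal (t ^ (p - 1))
      = (∫⁻ t in Ioi 0, g t * ENNReal.ofReal (t ^ (p - 1)))
        + ∫⁻ t in Ioi 0, P {a | t ≤ φ (B a)} * ENNReal.ofReal (t ^ (p - 1)) := by
    simp_rw [add_mul]
    exact lintegral_add_left' hgm.aemeasurable _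
  calc ∫⁻ ω, ENNReal.ofReal (A ω ^ p) ∂P
      = ENNReal.ofReal p * ∫⁻ t in Ioi 0, P {a | t ≤ A a} * ENNReal.ofReal (t ^ (p - 1)) := LA
    _ ≤ ENNReal.ofReal p
        * ∫⁻ t in Ioi 0, (g t + P {a | t ≤ φ (B a)}) * ENNReal.ofReal (t ^ (p - 1)) := by
        apply mul_le_mul_right
        exact setLIntegral_mono' measurableSet_Ioi fun t ht => mul_le_mul_left (key t ht) _
    _ = ENNReal.ofReal p * (∫⁻ t in Ioi 0, g t * ENNReal.ofReal (t ^ (p - 1)))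
        + ENNReal.ofReal p
          * ∫⁻ t in Ioi 0, P {a | t ≤ φ (B a)} * ENNReal.ofReal (t ^ (p - 1)) := by
        rw [hsplit2, mul_add]
    _ = ENNReal.ofReal p * (∫⁻ t in Ioi 0, g t * ENNReal.ofReal (t ^ (p - 1)))
        + ∫⁻ ω, ENNReal.ofReal (φ (B ω) ^ p) ∂P := by rw [← LB]
    _ ≤ ENNReal.ofReal p * (ENNReal.ofReal (2 * Real.exp (-(4 * p)))
          * ENNReal.ofReal (8 / 5 * (D ^ p / p)))
        + ENNReal.ofReal (D ^ p * (2:ℝ) ^ (p/2) + D ^ p * (3:ℝ) ^ (p/2)) :=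
        add_le_add (mul_le_mul_right termI _) termII
    _ ≤ ENNReal.ofReal ((7 * Real.sqrt p / Real.sqrt κ) ^ p) := by
        rw [← ENNReal.ofReal_mul (by positivity), ← ENNReal.ofReal_mul (by positivity),
          ← ENNReal.ofReal_add (by positivity) (by positivity)]
        apply ENNReal.ofReal_le_ofReal
        have hDp : (0:ℝ) ≤ D ^ p := Real.rpow_nonneg hD.le _
        have hlhs : p * (2 * Real.exp (-(4 * p)) * (8 / 5 * (D ^ p / p)))
            + (D ^ p * (2:ℝ) ^ (p/2) + D ^ p * (3:ℝ) ^ (p/2))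
            = D ^ p * (16/5 * Real.exp (-(4 * p)) + (2:ℝ) ^ (p/2) + (3:ℝ) ^ (p/2)) := by
          field_simp
          ring
        rw [hlhs]
        have hnum := numeric_bound hp
        have h35 : D ^ p * (3.5:ℝ) ^ p = (7 * Real.sqrt p / Real.sqrt κ) ^ p := by
          rw [← Real.mul_rpow hD.le (by norm_num)]
          congr 1
          rw [hD_def]
          ring
        calc D ^ p * (16/5 * Real.exp (-(4 * p)) + (2:ℝ) ^ (p/2) + (3:ℝ) ^ (p/2))
            ≤ D ^ p * (3.5:ℝ) ^ p := mul_le_mul_of_nonneg_left hnum hDp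
          _ = (7 * Real.sqrt p / Real.sqrt κ) ^ p := h35

set_option maxHeartbeats 1000000 in
/-- Tail-estimate lemma: if `ℙ(A ≥ x, B ≤ y) ≤ 2 exp(-κ x²/y²)` for all `x, y > 0`, then
`‖A‖_{L^p} ≤ 10 √p κ^{-1/2} ‖B‖_{L^N}` where `N(t) = t^p log^{p/2}(t+1)`. -/
theorem stmt3 {Ω : Type*} [MeasurableSpace Ω] (P : Measure Ω) [IsProbabilityMeasure P]
    (κ : ℝ) (hκ : 0 < κ) (p : ℝ) (hp : 1 ≤ p)
    (A B : Ω → ℝ) (hA : Measurable A) (hB : Measurable B)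
    (hAnn : ∀ ω, 0 ≤ A ω) (hBnn : ∀ ω, 0 ≤ B ω)
    (htail : ∀ x > (0:ℝ), ∀ y > (0:ℝ),
      P {ω | x ≤ A ω ∧ B ω ≤ y} ≤ ENNReal.ofReal (2 * Real.exp (-κ * x ^ 2 / y ^ 2))) :
    eLpNorm A (ENNReal.ofReal p) P ≤
      ENNReal.ofReal (10 * Real.sqrt p / Real.sqrt κ) *
        luxNorm (fun t => t ^ p * (Real.log (t + 1)) ^ (p / 2)) P B := by
  have hp0 : (0:ℝ) < p := lt_of_lt_of_le one_pos hp
  have hsp : 0 < Real.sqrt p := Real.sqrt_pos.mpr hp0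
  have hsκ : 0 < Real.sqrt κ := Real.sqrt_pos.mpr hκ
  have hC : (0:ℝ) < 10 * Real.sqrt p / Real.sqrt κ := by positivity
  set c : ℝ≥0∞ := ENNReal.ofReal (10 * Real.sqrt p / Real.sqrt κ) with hc_def
  have hc0 : c ≠ 0 := (ENNReal.ofReal_pos.mpr hC).ne'
  have hct : c ≠ ⊤ := ENNReal.ofReal_ne_top
  have keyl : ∀ l : ℝ,
      (0 < l ∧ ∫⁻ u, ENNReal.ofReal ((‖B u‖ / l) ^ p * Real.log (‖B u‖ / l + 1) ^ (p / 2)) ∂P ≤ 1) →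
      eLpNorm A (ENNReal.ofReal p) P ≤ ENNReal.ofReal l * c := by
    rintro l ⟨hl0, hlint⟩
    have hA' : Measurable fun ω => A ω / l := hA.div_const l
    have hB' : Measurable fun ω => B ω / l := hB.div_const l
    have hAnn' : ∀ ω, 0 ≤ A ω / l := fun ω => div_nonneg (hAnn ω) hl0.le
    have hBnn' : ∀ ω, 0 ≤ B ω / l := fun ω => div_nonneg (hBnn ω) hl0.le
    have htail' : ∀ x > (0:ℝ), ∀ y > (0:ℝ),
        P {ω | x ≤ A ω / l ∧ B ω / l ≤ y} ≤ ENNReal.ofReal (2 * Real.exp (-κ * x ^ 2 / y ^ 2)) := by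
      intro x hx y hy
      have hset : {ω | x ≤ A ω / l ∧ B ω / l ≤ y} = {ω | x * l ≤ A ω ∧ B ω ≤ y * l} := by
        ext ω
        simp only [mem_setOf_eq]
        rw [le_div_iff₀ hl0, div_le_iff₀ hl0]
      rw [hset]
      refine le_trans (htail (x * l) (by positivity) (y * l) (by positivity)) ?_
      apply ENNReal.ofReal_le_ofReal
      have harg : -κ * (x * l) ^ 2 / (y * l) ^ 2 = -κ * x ^ 2 / y ^ 2 := by
        rw [mul_pow, mul_pow, mul_comm (x^2) (l^2)]
        rw [show -κ * (l ^ 2 * x ^ 2) = l ^ 2 * (-κ * x ^ 2) by ring,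
          show y ^ 2 * l ^ 2 = l ^ 2 * y ^ 2 by ring]
        rw [mul_div_mul_left _ _ (by positivity : (l:ℝ) ^ 2 ≠ 0)]
      rw [harg]
    have hN' : ∫⁻ ω, ENNReal.ofReal ((B ω / l) ^ p * Real.log (B ω / l + 1) ^ (p / 2)) ∂P ≤ 1 := by
      refine le_trans (le_of_eq (lintegral_congr fun u => ?_)) hlint
      rw [Real.norm_of_nonneg (hBnn u)]
    have hcore := core_bound P κ hκ p hp _ _ hA' hB' hAnn' hBnn' htail' hN'
    have hpne : (ENNReal.ofReal p) ≠ 0 := (ENNReal.ofReal_pos.mpr hp0).ne'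
    rw [eLpNorm_eq_lintegral_rpow_enorm_toReal hpne ENNReal.ofReal_ne_top,
      ENNReal.toReal_ofReal hp0.le]
    have hrw : ∀ ω, (‖A ω‖ₑ) ^ p = ENNReal.ofReal (A ω ^ p) := fun ω => by
      rw [Real.enorm_eq_ofReal (hAnn ω), ENNReal.ofReal_rpow_of_nonneg (hAnn ω) hp0.le]
    have hint : ∫⁻ ω, ENNReal.ofReal (A ω ^ p) ∂P
        ≤ ENNReal.ofReal ((7 * Real.sqrt p / Real.sqrt κ * l) ^ p) := by
      have heq : ∀ ω, ENNReal.ofReal (A ω ^ p)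
          = ENNReal.ofReal ((A ω / l) ^ p) * ENNReal.ofReal (l ^ p) := by
        intro ω
        rw [← ENNReal.ofReal_mul (Real.rpow_nonneg (hAnn' ω) p)]
        congr 1
        rw [Real.div_rpow (hAnn ω) hl0.le]
        field_simp
      calc ∫⁻ ω, ENNReal.ofReal (A ω ^ p) ∂P
          = ∫⁻ ω, ENNReal.ofReal ((A ω / l) ^ p) * ENNReal.ofReal (l ^ p) ∂P :=
            lintegral_congr heq
        _ = (∫⁻ ω, ENNReal.ofReal ((A ω / l) ^ p) ∂P) * ENNReal.ofReal (l ^ p) :=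
            lintegral_mul_const' _ _ ENNReal.ofReal_ne_top
        _ ≤ ENNReal.ofReal ((7 * Real.sqrt p / Real.sqrt κ) ^ p) * ENNReal.ofReal (l ^ p) :=
            mul_le_mul_left hcore _
        _ = ENNReal.ofReal ((7 * Real.sqrt p / Real.sqrt κ * l) ^ p) := by
            rw [← ENNReal.ofReal_mul (by positivity),
              ← Real.mul_rpow (by positivity) hl0.le]
    calc (∫⁻ ω, (‖A ω‖ₑ) ^ p ∂P) ^ (1 / p)
        = (∫⁻ ω, ENNReal.ofReal (A ω ^ p) ∂P) ^ (1 / p) := by rw [lintegral_congr hrw]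
      _ ≤ (ENNReal.ofReal ((7 * Real.sqrt p / Real.sqrt κ * l) ^ p)) ^ (1 / p) :=
          ENNReal.rpow_le_rpow hint (by positivity)
      _ = ENNReal.ofReal (7 * Real.sqrt p / Real.sqrt κ * l) := by
          rw [← ENNReal.ofReal_rpow_of_nonneg (by positivity) hp0.le,
            ← ENNReal.rpow_mul, mul_one_div_cancel hp0.ne', ENNReal.rpow_one]
      _ ≤ ENNReal.ofReal l * c := by
          rw [hc_def, ← ENNReal.ofReal_mul hl0.le]
          apply ENNReal.ofReal_le_ofReal
          have h710 : 7 * Real.sqrt p / Real.sqrt κ ≤ 10 * Real.sqrt p / Real.sqrt κ := by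
            gcongr
            nlinarith
          nlinarith [mul_le_mul_of_nonneg_left h710 hl0.le]
  show eLpNorm A (ENNReal.ofReal p) P ≤ c * luxNorm _ P B
  rw [luxNorm, mul_comm, ← ENNReal.div_le_iff_le_mul (Or.inl hc0) (Or.inl hct)]
  refine le_iInf fun l => le_iInf fun hl => ?_
  rw [ENNReal.div_le_iff_le_mul (Or.inl hc0) (Or.inl hct)]
  exact keyl l hl
end

section
/- Let I be a nontrivial bounded interval in ℝ, α ∈ (0,1), q ∈ [1,∞], 𝒩 a Young function, and g : (0,1) → I an affine bijection. Then for every Bochner measurable f : I → X, min{|I|^{−1}, |I|^α} ‖f‖_{B^α_{𝒩,q}(I;X)} ≤ ‖f∘g‖_{B^α_{𝒩,q}(0,1;X)} ≤ max{|I|^{−1}, |I|^α} ‖f‖_{B^α_{𝒩,q}(I;X)}. -/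
open MeasureTheory ENNReal Filter Set

/-- The Orlicz modulus of continuity
`ω_{N,I}(f,t) = sup_{|h| ≤ t} ‖f(·+h) - f‖_{L^N(I(h);X)}`. -/
noncomputable def omegaOrlicz {X : Type*} [NormedAddCommGroup X]
    (N : ℝ → ℝ) (I : Set ℝ) (f : ℝ → X) (t : ℝ) : ℝ≥0∞ :=
  ⨆ (h : ℝ) (_ : |h| ≤ t),
    luxNorm N (volume.restrict {s | s ∈ I ∧ s + h ∈ I}) fun s => f (s + h) - f s

/-- The measure `dt/t` on `(0,∞)`. -/
noncomputable def mulHaar : Measure ℝ :=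
  (volume.restrict (Ioi (0:ℝ))).withDensity fun t => ENNReal.ofReal t⁻¹

/-- `L^q` norm (with `q ∈ [1,∞]`) of an `ℝ≥0∞`-valued function. -/
noncomputable def lqNormENN (q : ℝ≥0∞) (μ : Measure ℝ) (F : ℝ → ℝ≥0∞) : ℝ≥0∞ :=
  if q = ∞ then essSup F μ else (∫⁻ t, F t ^ q.toReal ∂μ) ^ (1 / q.toReal)

/-- The Besov–Orlicz norm
`‖f‖_{B^α_{N,q}(I;X)} = ‖f‖_{L^N(I;X)} + ‖t^{-α} ω_{N,I}(f,t)‖_{L^q((0,∞),dt/t)}`. -/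
noncomputable def besovOrliczNorm {X : Type*} [NormedAddCommGroup X]
    (N : ℝ → ℝ) (q : ℝ≥0∞) (α : ℝ) (I : Set ℝ) (f : ℝ → X) : ℝ≥0∞ :=
  luxNorm N (volume.restrict I) f +
    lqNormENN q mulHaar fun t => ENNReal.ofReal (t ^ (-α)) * omegaOrlicz N I f t

section Aux

lemma N_mul_le {N : ℝ → ℝ} (hN0 : N 0 = 0) (hconv : ConvexOn ℝ (Ici 0) N)
    {m x : ℝ} (hm0 : 0 ≤ m) (hm1 : m ≤ 1) (hx : 0 ≤ x) : N (m * x) ≤ m * N x := by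
  have h1m : (0:ℝ) ≤ 1 - m := by linarith
  have hsum : m + (1 - m) = 1 := by ring
  have h := hconv.2 (mem_Ici.2 hx) (mem_Ici.2 (le_refl (0:ℝ))) hm0 h1m hsum
  simp only [smul_eq_mul, mul_zero, add_zero, hN0] at h
  linarith

lemma lux_smul_ge {U X : Type*} [MeasurableSpace U] [NormedAddCommGroup X]
    {N : ℝ → ℝ} (hN0 : N 0 = 0) (hconv : ConvexOn ℝ (Ici 0) N)
    (hnonneg : ∀ x ∈ Ici (0:ℝ), 0 ≤ N x)
    (μ : Measure U) (f : U → X) {m c : ℝ} (hm0 : 0 < m) (hm1 : m ≤ 1) (hmc : m ≤ c) :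
    ENNReal.ofReal m * luxNorm N μ f ≤ luxNorm N (ENNReal.ofReal c • μ) f := by
  refine le_iInf₂ fun l hl => ?_
  obtain ⟨hl0, hint⟩ := hl
  rw [lintegral_smul_measure] at hint
  have hfeas : (0 < l / m) ∧
      ∫⁻ u, ENNReal.ofReal (N (‖f u‖ / (l / m))) ∂μ ≤ 1 := by
    refine ⟨div_pos hl0 hm0, ?_⟩
    have hpt : ∀ u, ENNReal.ofReal (N (‖f u‖ / (l / m))) ≤
        ENNReal.ofReal m * ENNReal.ofReal (N (‖f u‖ / l)) := by
      intro u
      have hr : (0:ℝ) ≤ ‖f u‖ / l := div_nonneg (norm_nonneg _) hl0.le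
      have harg : ‖f u‖ / (l / m) = m * (‖f u‖ / l) := by
        rw [div_div_eq_mul_div, mul_comm, mul_div_assoc]
      rw [harg, ← ENNReal.ofReal_mul hm0.le]
      exact ENNReal.ofReal_le_ofReal (N_mul_le hN0 hconv hm0.le hm1 hr)
    calc ∫⁻ u, ENNReal.ofReal (N (‖f u‖ / (l / m))) ∂μ
        ≤ ∫⁻ u, ENNReal.ofReal m * ENNReal.ofReal (N (‖f u‖ / l)) ∂μ :=
          lintegral_mono hpt
      _ = ENNReal.ofReal m * ∫⁻ u, ENNReal.ofReal (N (‖f u‖ / l)) ∂μ :=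
          lintegral_const_mul' _ _ ENNReal.ofReal_ne_top
      _ ≤ ENNReal.ofReal c * ∫⁻ u, ENNReal.ofReal (N (‖f u‖ / l)) ∂μ :=
          mul_le_mul_left (ENNReal.ofReal_le_ofReal hmc) _
      _ ≤ 1 := hint
  have hle : luxNorm N μ f ≤ ENNReal.ofReal (l / m) := iInf₂_le (l / m) hfeas
  calc ENNReal.ofReal m * luxNorm N μ f ≤ ENNReal.ofReal m * ENNReal.ofReal (l / m) :=
        mul_le_mul_right hle _
    _ = ENNReal.ofReal l := by
        rw [← ENNReal.ofReal_mul hm0.le, mul_div_cancel₀ _ hm0.ne']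

lemma ennreal_le_of_mul_le {m : ℝ} (hm : 0 < m) {A B : ℝ≥0∞}
    (h : ENNReal.ofReal m * A ≤ B) : A ≤ ENNReal.ofReal m⁻¹ * B := by
  have : A = ENNReal.ofReal m⁻¹ * (ENNReal.ofReal m * A) := by
    rw [← mul_assoc, ← ENNReal.ofReal_mul (inv_nonneg.2 hm.le), inv_mul_cancel₀ hm.ne',
      ENNReal.ofReal_one, one_mul]
  rw [this]
  exact mul_le_mul_right h _

lemma min_inv_eq_max {c : ℝ} (hc : 0 < c) : (min 1 c⁻¹)⁻¹ = max 1 c := by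
  rcases le_total c 1 with h | h
  · rw [min_eq_left (one_le_inv_iff₀.2 ⟨hc, h⟩ : (1:ℝ) ≤ c⁻¹), max_eq_left h, inv_one]
  · rw [min_eq_right (inv_le_one_of_one_le₀ h), max_eq_right h, inv_inv]

lemma lux_smul_le {U X : Type*} [MeasurableSpace U] [NormedAddCommGroup X]
    {N : ℝ → ℝ} (hN0 : N 0 = 0) (hconv : ConvexOn ℝ (Ici 0) N)
    (hnonneg : ∀ x ∈ Ici (0:ℝ), 0 ≤ N x)
    (μ : Measure U) (f : U → X) {c : ℝ} (hc : 0 < c) :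
    luxNorm N (ENNReal.ofReal c • μ) f ≤ ENNReal.ofReal (max 1 c) * luxNorm N μ f := by
  have hm0 : 0 < min 1 c⁻¹ := lt_min one_pos (inv_pos.2 hc)
  have h := lux_smul_ge hN0 hconv hnonneg (ENNReal.ofReal c • μ) f
    (m := min 1 c⁻¹) (c := c⁻¹) hm0 (min_le_left _ _) (min_le_right _ _)
  rw [smul_smul, ← ENNReal.ofReal_mul (inv_pos.2 hc).le, inv_mul_cancel₀ hc.ne',
    ENNReal.ofReal_one, one_smul] at h
  have h2 := ennreal_le_of_mul_le hm0 h
  rwa [min_inv_eq_max hc] at h2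

end Aux
lemma luxNorm_map' {U V X : Type*} [MeasurableSpace U] [MeasurableSpace V]
    [NormedAddCommGroup X] (N : ℝ → ℝ) {g : U → V} (hg : MeasurableEmbedding g)
    (μ : Measure U) (F : V → X) :
    luxNorm N (Measure.map g μ) F = luxNorm N μ (F ∘ g) := by
  unfold luxNorm
  refine iInf_congr fun l => ?_
  rw [hg.lintegral_map]
  rfl

lemma affine_embedding (c d : ℝ) (hd : d ≠ 0) :
    MeasurableEmbedding (fun x : ℝ => c + d * x) := by
  have h := ((Homeomorph.mulLeft₀ d hd).trans (Homeomorph.addLeft c)).measurableEmbedding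
  convert h using 1
  ext x
  simp [Homeomorph.trans_apply]

lemma map_affine_volume (c d : ℝ) (hd : d ≠ 0) :
    Measure.map (fun x : ℝ => c + d * x) volume = ENNReal.ofReal |d|⁻¹ • volume := by
  have hcomp : (fun x : ℝ => c + d * x) = (fun x : ℝ => c + x) ∘ (fun x : ℝ => d * x) := rfl
  rw [hcomp, ← Measure.map_map (measurable_const_add c) (measurable_const_mul d),
    Real.map_volume_mul_left hd, Measure.map_smul,
    map_add_left_eq_self volume c, abs_inv]

lemma map_mulHaar_mul {k : ℝ} (hk : 0 < k) :
    Measure.map (fun t : ℝ => k * t) mulHaar = mulHaar := by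
  have hme : MeasurableEmbedding (fun t : ℝ => k * t) := by
    have h := (affine_embedding 0 k hk.ne')
    simpa using h
  refine Measure.ext fun s hs => ?_
  rw [Measure.map_apply (measurable_const_mul k) hs]
  unfold mulHaar
  rw [withDensity_apply _ hs, withDensity_apply _ (hs.preimage (measurable_const_mul k)),
    Measure.restrict_restrict hs, Measure.restrict_restrict (hs.preimage (measurable_const_mul k))]
  have hpre : (fun t : ℝ => k * t) ⁻¹' (Ioi 0) = Ioi 0 := by
    ext t; simp only [mem_preimage, mem_Ioi]
    constructor
    · intro h; nlinarith
    · intro h; positivity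
  have hset : (fun t : ℝ => k * t) ⁻¹' s ∩ Ioi 0 = (fun t : ℝ => k * t) ⁻¹' (s ∩ Ioi 0) := by
    rw [preimage_inter, hpre]
  rw [hset]
  have hptw : (fun t : ℝ => ENNReal.ofReal t⁻¹) =
      fun t : ℝ => ENNReal.ofReal k * ENNReal.ofReal (k * t)⁻¹ := by
    funext t
    rw [← ENNReal.ofReal_mul hk.le]
    congr 1
    rcases eq_or_ne t 0 with rfl | ht
    · simp
    · field_simp
  calc ∫⁻ t in (fun t : ℝ => k * t) ⁻¹' (s ∩ Ioi 0), ENNReal.ofReal t⁻¹ ∂volume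
      = ∫⁻ t in (fun t : ℝ => k * t) ⁻¹' (s ∩ Ioi 0),
          ENNReal.ofReal k * ENNReal.ofReal (k * t)⁻¹ ∂volume := by rw [← hptw]
    _ = ENNReal.ofReal k * ∫⁻ t in (fun t : ℝ => k * t) ⁻¹' (s ∩ Ioi 0),
          ENNReal.ofReal (k * t)⁻¹ ∂volume := lintegral_const_mul' _ _ ENNReal.ofReal_ne_top
    _ = ENNReal.ofReal k * ∫⁻ u, ENNReal.ofReal u⁻¹
          ∂((Measure.map (fun t : ℝ => k * t) volume).restrict (s ∩ Ioi 0)) := by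
        rw [Measure.restrict_map (measurable_const_mul k) (hs.inter measurableSet_Ioi),
          hme.lintegral_map]
    _ = ∫⁻ u in s ∩ Ioi 0, ENNReal.ofReal u⁻¹ ∂volume := by
        have : Measure.map (fun t : ℝ => k * t) volume = ENNReal.ofReal |k|⁻¹ • volume := by
          have h := map_affine_volume 0 k hk.ne'
          simpa using h
        rw [this, Measure.restrict_smul, lintegral_smul_measure, smul_eq_mul, ← mul_assoc,
          ← ENNReal.ofReal_mul hk.le, abs_of_pos hk, mul_inv_cancel₀ hk.ne',
          ENNReal.ofReal_one, one_mul]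

lemma mulHaar_ae_pos : ∀ᵐ t ∂mulHaar, (0:ℝ) < t := by
  rw [ae_iff]
  have hset : {t : ℝ | ¬ (0:ℝ) < t} = Iic 0 := by ext t; simp
  rw [hset]
  unfold mulHaar
  rw [withDensity_apply _ measurableSet_Iic, Measure.restrict_restrict measurableSet_Iic]
  have : Iic (0:ℝ) ∩ Ioi 0 = ∅ := by rw [Iic_inter_Ioi]; exact Ioc_self 0
  rw [this]
  simp

lemma lqNormENN_mono {q : ℝ≥0∞} {μ : Measure ℝ} {F G : ℝ → ℝ≥0∞}
    (h : F ≤ᵐ[μ] G) : lqNormENN q μ F ≤ lqNormENN q μ G := by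
  unfold lqNormENN
  split
  · exact essSup_mono_ae h
  · refine ENNReal.rpow_le_rpow ?_ (by positivity)
    exact lintegral_mono_ae (h.mono fun x hx => ENNReal.rpow_le_rpow hx ENNReal.toReal_nonneg)

lemma lqNormENN_congr_ae {q : ℝ≥0∞} {μ : Measure ℝ} {F G : ℝ → ℝ≥0∞}
    (h : F =ᵐ[μ] G) : lqNormENN q μ F = lqNormENN q μ G := by
  unfold lqNormENN
  split
  · exact essSup_congr_ae h
  · rw [lintegral_congr_ae (h.mono fun x hx => by rw [hx])]

lemma lqNormENN_const_mul {q : ℝ≥0∞} (hq : 1 ≤ q) {μ : Measure ℝ} (c : ℝ≥0∞)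
    (hc : c ≠ ∞) (F : ℝ → ℝ≥0∞) :
    lqNormENN q μ (fun t => c * F t) = c * lqNormENN q μ F := by
  unfold lqNormENN
  split_ifs with hq'
  · exact ENNReal.essSup_const_mul
  · have hp : q.toReal ≠ 0 := by
      have h1 : (1:ℝ) ≤ q.toReal := by
        have := ENNReal.toReal_mono hq' hq
        simpa using this
      linarith
    simp_rw [ENNReal.mul_rpow_of_nonneg _ _ ENNReal.toReal_nonneg]
    rw [lintegral_const_mul' _ _ (ENNReal.rpow_ne_top_of_nonneg ENNReal.toReal_nonneg hc),
      ENNReal.mul_rpow_of_nonneg _ _ (by positivity : (0:ℝ) ≤ 1 / q.toReal),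
      ← ENNReal.rpow_mul, mul_one_div_cancel hp, ENNReal.rpow_one]

lemma lqNormENN_map {q : ℝ≥0∞} {μ : Measure ℝ} {m : ℝ → ℝ}
    (hm : MeasurableEmbedding m) (F : ℝ → ℝ≥0∞) :
    lqNormENN q (Measure.map m μ) F = lqNormENN q μ (F ∘ m) := by
  unfold lqNormENN
  split
  · exact hm.essSup_map_measure
  · rw [hm.lintegral_map]
    rfl
lemma minmax_ineqs {k e : ℝ} (hk : 0 < k) (he : 0 < e) (h1 : k ≤ 1 → e ≤ 1)
    (h2 : 1 ≤ k → 1 ≤ e) :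
    min k⁻¹ e ≤ min 1 k⁻¹ ∧ min k⁻¹ e ≤ min 1 k⁻¹ * e ∧
      max 1 k⁻¹ ≤ max k⁻¹ e ∧ max 1 k⁻¹ * e ≤ max k⁻¹ e := by
  rcases le_total k 1 with h | h
  · have hi : 1 ≤ k⁻¹ := one_le_inv_iff₀.2 ⟨hk, h⟩
    have he1 := h1 h
    refine ⟨?_, ?_, ?_, ?_⟩
    · rw [min_eq_left hi]; exact le_trans (min_le_right _ _) he1
    · rw [min_eq_left hi, one_mul]; exact min_le_right _ _
    · rw [max_eq_right hi]; exact le_max_left _ _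
    · rw [max_eq_right hi]
      calc k⁻¹ * e ≤ k⁻¹ * 1 := mul_le_mul_of_nonneg_left he1 (inv_pos.2 hk).le
        _ = k⁻¹ := mul_one _
        _ ≤ max k⁻¹ e := le_max_left _ _
  · have hi : k⁻¹ ≤ 1 := inv_le_one_of_one_le₀ h
    have he1 := h2 h
    refine ⟨?_, ?_, ?_, ?_⟩
    · rw [min_eq_right hi]; exact min_le_left _ _
    · rw [min_eq_right hi]
      calc min k⁻¹ e ≤ k⁻¹ := min_le_left _ _
        _ = k⁻¹ * 1 := (mul_one _).symm
        _ ≤ k⁻¹ * e := mul_le_mul_of_nonneg_left he1 (inv_pos.2 hk).le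
    · rw [max_eq_left hi]; exact le_trans he1 (le_max_right _ _)
    · rw [max_eq_left hi, one_mul]; exact le_max_right _ _
/-- Scaling of the Besov–Orlicz norm under an affine bijection `g : (0,1) → I`:
`min{|I|⁻¹, |I|^α} ‖f‖_{B^α_{N,q}(I;X)} ≤ ‖f ∘ g‖_{B^α_{N,q}(0,1;X)}
  ≤ max{|I|⁻¹, |I|^α} ‖f‖_{B^α_{N,q}(I;X)}`. -/
theorem stmt10 {X : Type*} [NormedAddCommGroup X]
    (a b : ℝ) (hab : a < b) (α : ℝ) (hα : 0 < α) (hα1 : α < 1)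
    (q : ℝ≥0∞) (hq : 1 ≤ q) (N : ℝ → ℝ)
    (hN0 : N 0 = 0) (hmono : MonotoneOn N (Ici 0)) (hconv : ConvexOn ℝ (Ici 0) N)
    (hnonneg : ∀ x ∈ Ici (0:ℝ), 0 ≤ N x) (htop : Tendsto N atTop atTop)
    (g : ℝ → ℝ) (c d : ℝ) (hgdef : ∀ x, g x = c + d * x)
    (hgbij : Set.BijOn g (Ioo (0:ℝ) 1) (Ioo a b))
    (f : ℝ → X) (hf : AEStronglyMeasurable f volume) :
    ENNReal.ofReal (min (b - a)⁻¹ ((b - a) ^ α)) * besovOrliczNorm N q α (Ioo a b) f ≤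
      besovOrliczNorm N q α (Ioo 0 1) (f ∘ g) ∧
    besovOrliczNorm N q α (Ioo 0 1) (f ∘ g) ≤
      ENNReal.ofReal (max (b - a)⁻¹ ((b - a) ^ α)) * besovOrliczNorm N q α (Ioo a b) f := by
  have hk : 0 < b - a := sub_pos.2 hab
  obtain rfl : g = fun x => c + d * x := funext hgdef
  set G : ℝ → ℝ := fun x => c + d * x with hGdef
  have hd : d ≠ 0 := by
    intro h
    have h1 : (1/4 : ℝ) ∈ Ioo (0:ℝ) 1 := by norm_num
    have h2 : (1/2 : ℝ) ∈ Ioo (0:ℝ) 1 := by norm_num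
    have := hgbij.injOn h1 h2 (by simp [hGdef, h])
    norm_num at this
  have hGm : Measurable G := (measurable_id.const_mul d).const_add c
  have hGe : MeasurableEmbedding G := affine_embedding c d hd
  have hmap0 : Measure.map G volume = ENNReal.ofReal |d|⁻¹ • volume := map_affine_volume c d hd
  have himg : G '' Ioo 0 1 = Ioo a b := hgbij.image_eq
  have hpre : G ⁻¹' (Ioo a b) = Ioo 0 1 := by rw [← himg, hGe.injective.preimage_image]
  have habs : 0 < |d| := abs_pos.2 hd
  have hdk : |d| = b - a := by
    have h1 : (Measure.map G volume) (Ioo a b) = volume (Ioo (0:ℝ) 1) := by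
      rw [Measure.map_apply hGm measurableSet_Ioo, hpre]
    rw [hmap0] at h1
    have h2 : ENNReal.ofReal |d|⁻¹ * ENNReal.ofReal (b - a) = 1 := by
      simpa [Real.volume_Ioo, Measure.smul_apply, smul_eq_mul] using h1
    rw [← ENNReal.ofReal_mul (inv_nonneg.2 (abs_nonneg d)), ENNReal.ofReal_eq_one] at h2
    field_simp at h2
    linarith
  have hmap : Measure.map G volume = ENNReal.ofReal (b - a)⁻¹ • volume := by
    rw [hmap0, hdk]
  have hmem : ∀ x : ℝ, G x ∈ Ioo a b ↔ x ∈ Ioo (0:ℝ) 1 := by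
    intro x; rw [← hpre]; exact Iff.rfl
  have key : ∀ (T : Set ℝ), MeasurableSet T → ∀ F : ℝ → X,
      luxNorm N (ENNReal.ofReal (b - a)⁻¹ • volume.restrict T) F
        = luxNorm N (volume.restrict (G ⁻¹' T)) (F ∘ G) := by
    intro T hT F
    rw [← luxNorm_map' N hGe (volume.restrict (G ⁻¹' T)) F,
      ← Measure.restrict_map hGm hT, hmap, Measure.restrict_smul]
  set m₁ : ℝ := min 1 (b - a)⁻¹ with hm₁
  set m₂ : ℝ := max 1 (b - a)⁻¹ with hm₂
  have hm₁0 : 0 < m₁ := lt_min one_pos (inv_pos.2 hk)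
  -- L^N part
  have hA' : luxNorm N (volume.restrict (Ioo 0 1)) (f ∘ G)
      = luxNorm N (ENNReal.ofReal (b - a)⁻¹ • volume.restrict (Ioo a b)) f := by
    rw [key _ measurableSet_Ioo f, hpre]
  have hAlow : ENNReal.ofReal m₁ * luxNorm N (volume.restrict (Ioo a b)) f
      ≤ luxNorm N (volume.restrict (Ioo 0 1)) (f ∘ G) := by
    rw [hA']
    exact lux_smul_ge hN0 hconv hnonneg _ _ hm₁0 (min_le_left _ _) (min_le_right _ _)
  have hAup : luxNorm N (volume.restrict (Ioo 0 1)) (f ∘ G)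
      ≤ ENNReal.ofReal m₂ * luxNorm N (volume.restrict (Ioo a b)) f := by
    rw [hA']
    exact lux_smul_le hN0 hconv hnonneg _ _ (inv_pos.2 hk)
  -- shift transfer
  have hshift : ∀ h : ℝ,
      luxNorm N (volume.restrict {s | s ∈ Ioo (0:ℝ) 1 ∧ s + h ∈ Ioo (0:ℝ) 1})
        (fun s => (f ∘ G) (s + h) - (f ∘ G) s)
      = luxNorm N (ENNReal.ofReal (b - a)⁻¹ •
          volume.restrict {u | u ∈ Ioo a b ∧ u + d * h ∈ Ioo a b})
        (fun u => f (u + d * h) - f u) := by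
    intro h
    have hTmeas : MeasurableSet {u : ℝ | u ∈ Ioo a b ∧ u + d * h ∈ Ioo a b} := by
      have heq : {u : ℝ | u ∈ Ioo a b ∧ u + d * h ∈ Ioo a b}
          = Ioo a b ∩ (fun u : ℝ => u + d * h) ⁻¹' (Ioo a b) := rfl
      rw [heq]
      exact measurableSet_Ioo.inter (measurableSet_Ioo.preimage (measurable_add_const _))
    have hset : {s : ℝ | s ∈ Ioo (0:ℝ) 1 ∧ s + h ∈ Ioo (0:ℝ) 1}
        = G ⁻¹' {u : ℝ | u ∈ Ioo a b ∧ u + d * h ∈ Ioo a b} := by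
      ext s
      simp only [mem_preimage, mem_setOf_eq]
      have harith : G s + d * h = G (s + h) := by simp only [hGdef]; ring
      rw [harith, hmem s, hmem (s + h)]
    have hfun : (fun s => (f ∘ G) (s + h) - (f ∘ G) s)
        = ((fun u => f (u + d * h) - f u) ∘ G) := by
      funext s
      have harith : G s + d * h = G (s + h) := by simp only [hGdef]; ring
      simp only [Function.comp_apply]
      rw [harith]
    rw [hset, hfun, key _ hTmeas (fun u => f (u + d * h) - f u)]
  -- omega bounds
  have hΩlow : ∀ t : ℝ,
      ENNReal.ofReal m₁ * omegaOrlicz N (Ioo a b) f ((b - a) * t)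
        ≤ omegaOrlicz N (Ioo 0 1) (f ∘ G) t := by
    intro t
    unfold omegaOrlicz
    simp only [ENNReal.mul_iSup]
    refine iSup₂_le fun h' hh' => ?_
    have hht : |h' / d| ≤ t := by
      rw [abs_div, hdk, div_le_iff₀ hk]
      linarith [hh', mul_comm (b - a) t]
    have hd' : d * (h' / d) = h' := by field_simp
    refine le_iSup₂_of_le (h' / d) hht ?_
    rw [hshift (h' / d), hd']
    exact lux_smul_ge hN0 hconv hnonneg _ _ hm₁0 (min_le_left _ _) (min_le_right _ _)
  have hΩup : ∀ t : ℝ,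
      omegaOrlicz N (Ioo 0 1) (f ∘ G) t
        ≤ ENNReal.ofReal m₂ * omegaOrlicz N (Ioo a b) f ((b - a) * t) := by
    intro t
    unfold omegaOrlicz
    simp only [ENNReal.mul_iSup]
    refine iSup₂_le fun h hh => ?_
    have habs' : |d * h| ≤ (b - a) * t := by
      rw [abs_mul, hdk]
      exact mul_le_mul_of_nonneg_left hh hk.le
    refine le_iSup₂_of_le (d * h) habs' ?_
    rw [hshift h]
    exact lux_smul_le hN0 hconv hnonneg _ _ (inv_pos.2 hk)
  -- substitution in the L^q norm
  have hkm : MeasurableEmbedding (fun t : ℝ => (b - a) * t) := by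
    simpa using affine_embedding 0 (b - a) hk.ne'
  have hsub : lqNormENN q mulHaar
        (fun t => ENNReal.ofReal (t ^ (-α)) * omegaOrlicz N (Ioo a b) f ((b - a) * t))
      = ENNReal.ofReal ((b - a) ^ α) * lqNormENN q mulHaar
        (fun t => ENNReal.ofReal (t ^ (-α)) * omegaOrlicz N (Ioo a b) f t) := by
    have hae : (fun t => ENNReal.ofReal (t ^ (-α)) * omegaOrlicz N (Ioo a b) f ((b - a) * t))
        =ᵐ[mulHaar] (fun t => ENNReal.ofReal ((b - a) ^ α) *
          ((fun s => ENNReal.ofReal (s ^ (-α)) * omegaOrlicz N (Ioo a b) f s) ((b - a) * t))) := by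
      filter_upwards [mulHaar_ae_pos] with t ht
      symm
      rw [← mul_assoc, ← ENNReal.ofReal_mul (Real.rpow_nonneg hk.le _)]
      congr 2
      rw [Real.mul_rpow hk.le ht.le, ← mul_assoc, ← Real.rpow_add hk, add_neg_cancel,
        Real.rpow_zero, one_mul]
    rw [lqNormENN_congr_ae hae, lqNormENN_const_mul hq _ ENNReal.ofReal_ne_top]
    congr 1
    rw [show (fun t : ℝ =>
          (fun s => ENNReal.ofReal (s ^ (-α)) * omegaOrlicz N (Ioo a b) f s) ((b - a) * t))
        = (fun s => ENNReal.ofReal (s ^ (-α)) * omegaOrlicz N (Ioo a b) f s)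
            ∘ (fun t : ℝ => (b - a) * t) from rfl,
      ← lqNormENN_map hkm _, map_mulHaar_mul hk]
  -- L^q part bounds
  have hBlow : ENNReal.ofReal (m₁ * (b - a) ^ α) * lqNormENN q mulHaar
        (fun t => ENNReal.ofReal (t ^ (-α)) * omegaOrlicz N (Ioo a b) f t)
      ≤ lqNormENN q mulHaar
        (fun t => ENNReal.ofReal (t ^ (-α)) * omegaOrlicz N (Ioo 0 1) (f ∘ G) t) := by
    rw [ENNReal.ofReal_mul hm₁0.le, mul_assoc, ← hsub,
      ← lqNormENN_const_mul hq _ ENNReal.ofReal_ne_top]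
    refine lqNormENN_mono (ae_of_all _ fun t => ?_)
    exact le_of_eq_of_le (mul_left_comm _ _ _) (mul_le_mul_right (hΩlow t) _)
  have hBup : lqNormENN q mulHaar
        (fun t => ENNReal.ofReal (t ^ (-α)) * omegaOrlicz N (Ioo 0 1) (f ∘ G) t)
      ≤ ENNReal.ofReal (m₂ * (b - a) ^ α) * lqNormENN q mulHaar
        (fun t => ENNReal.ofReal (t ^ (-α)) * omegaOrlicz N (Ioo a b) f t) := by
    rw [ENNReal.ofReal_mul (le_trans zero_le_one (le_max_left _ _)), mul_assoc, ← hsub,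
      ← lqNormENN_const_mul hq _ ENNReal.ofReal_ne_top]
    refine lqNormENN_mono (ae_of_all _ fun t => ?_)
    exact le_of_le_of_eq (mul_le_mul_right (hΩup t) _) (mul_left_comm _ _ _)
  -- final assembly
  obtain ⟨r1, r2, r3, r4⟩ := minmax_ineqs hk (Real.rpow_pos_of_pos hk α)
    (fun h => Real.rpow_le_one hk.le h hα.le) (fun h => Real.one_le_rpow h hα.le)
  constructor
  · unfold besovOrliczNorm
    rw [mul_add]
    exact add_le_add
      (le_trans (mul_le_mul_left (ENNReal.ofReal_le_ofReal r1) _) hAlow)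
      (le_trans (mul_le_mul_left (ENNReal.ofReal_le_ofReal r2) _) hBlow)
  · unfold besovOrliczNorm
    rw [mul_add]
    exact add_le_add
      (hAup.trans (mul_le_mul_left (ENNReal.ofReal_le_ofReal r3) _))
      (hBup.trans (mul_le_mul_left (ENNReal.ofReal_le_ofReal r4) _))
end

section
/- Extension by zero: Let X be a Banach space, p ∈ (1,∞], α ∈ (0,1) with αp > 1. Then there is a constant C such that ‖f‖_{B^α_{p,∞}(ℝ;X)} ≤ C ‖f‖_{B^α_{p,∞}((0,∞);X)} for every continuous f : ℝ → X with f = 0 on (−∞, 0]. -/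
open MeasureTheory ENNReal Filter Set

/-- The `L^p` modulus of continuity. -/
noncomputable def omegaLp {X : Type*} [NormedAddCommGroup X]
    (p : ℝ≥0∞) (I : Set ℝ) (f : ℝ → X) (t : ℝ) : ℝ≥0∞ :=
  ⨆ (h : ℝ) (_ : |h| ≤ t),
    eLpNorm (fun s => f (s + h) - f s) p (volume.restrict {s | s ∈ I ∧ s + h ∈ I})

/-- The `B^α_{p,∞}` norm on `I`: `‖f‖_{L^p(I;X)} + sup_{t>0} t^{-α} ω_{p,I}(f,t)`. -/
noncomputable def besovInftyNorm {X : Type*} [NormedAddCommGroup X]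
    (p : ℝ≥0∞) (α : ℝ) (I : Set ℝ) (f : ℝ → X) : ℝ≥0∞ :=
  eLpNorm f p (volume.restrict I) +
    ⨆ (t : ℝ) (_ : 0 < t), ENNReal.ofReal (t ^ (-α)) * omegaLp p I f t

section Aux

variable {X : Type*} [NormedAddCommGroup X]

/-- Translation invariance of `eLpNorm` on the line. -/
private lemma eLpNorm_shift (p : ℝ≥0∞) {g : ℝ → X} (hg : Continuous g) (c : ℝ)
    {B : Set ℝ} (hB : MeasurableSet B) :
    eLpNorm (fun x => g (x + c)) p (volume.restrict ((fun x : ℝ => x + c) ⁻¹' B)) =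
      eLpNorm g p (volume.restrict B) := by
  have hmeas : Measurable (fun x : ℝ => x + c) := measurable_add_const c
  have hmp : MeasurePreserving (fun x : ℝ => x + c)
      (volume.restrict ((fun x : ℝ => x + c) ⁻¹' B)) (volume.restrict B) := by
    refine ⟨hmeas, ?_⟩
    rw [← Measure.restrict_map hmeas hB, (measurePreserving_add_right volume c).map_eq]
  exact eLpNorm_comp_measurePreserving hg.aestronglyMeasurable hmp

/-- A two-point Minkowski-type inequality in `ℝ≥0∞`. -/
private lemma ennreal_mink {q : ℝ} (hq : 1 ≤ q) (x y : ℝ≥0∞) :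
    (x ^ q + (x + y) ^ q) ^ (1 / q) ≤ (2 : ℝ≥0∞) ^ (1 / q) * x + y := by
  have h0 : 0 < q := lt_of_lt_of_le zero_lt_one hq
  have h := ENNReal.Lp_add_le (Finset.univ : Finset (Fin 2)) ![x, x] ![0, y] hq
  simp only [Fin.sum_univ_two, Matrix.cons_val_zero, Matrix.cons_val_one, Matrix.head_cons,
    add_zero, zero_add] at h
  have h1 : (0 : ℝ≥0∞) ^ q = 0 := ENNReal.zero_rpow_of_pos h0
  have h2 : (x ^ q + x ^ q) = 2 * x ^ q := by ring
  have h3 : ((2 : ℝ≥0∞) * x ^ q) ^ (1 / q) = 2 ^ (1 / q) * x := by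
    rw [ENNReal.mul_rpow_of_nonneg _ _ (by positivity), ← ENNReal.rpow_mul,
      mul_one_div_cancel (ne_of_gt h0), ENNReal.rpow_one]
  have h4 : ((0 : ℝ≥0∞) + y ^ q) ^ (1 / q) = y := by
    rw [zero_add, ← ENNReal.rpow_mul, mul_one_div_cancel (ne_of_gt h0), ENNReal.rpow_one]
  rw [h1, h2, h3, h4] at h
  exact h

/-- The modulus at scale `δ` is controlled by `δ^α` times the Besov seminorm. -/
private lemma omegaLp_le_rpow_mul (p : ℝ≥0∞) (α : ℝ) (f : ℝ → X) {δ : ℝ} (hδ : 0 < δ) :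
    omegaLp p (Ioi 0) f δ ≤ ENNReal.ofReal (δ ^ α) *
      ⨆ (t : ℝ) (_ : 0 < t), ENNReal.ofReal (t ^ (-α)) * omegaLp p (Ioi 0) f t := by
  have h1 : ENNReal.ofReal (δ ^ (-α)) * omegaLp p (Ioi 0) f δ ≤
      ⨆ (t : ℝ) (_ : 0 < t), ENNReal.ofReal (t ^ (-α)) * omegaLp p (Ioi 0) f t :=
    le_iSup₂ (f := fun (t : ℝ) (_ : 0 < t) =>
      ENNReal.ofReal (t ^ (-α)) * omegaLp p (Ioi 0) f t) δ hδ
  calc omegaLp p (Ioi 0) f δ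
      = ENNReal.ofReal (δ ^ α) * (ENNReal.ofReal (δ ^ (-α)) * omegaLp p (Ioi 0) f δ) := by
        rw [← mul_assoc, ← ENNReal.ofReal_mul (by positivity), ← Real.rpow_add hδ]
        simp
    _ ≤ _ := mul_le_mul_right h1 _

/-- One dyadic halving step near the origin. -/
private lemma besov_step (p : ℝ≥0∞) (hp1 : 1 ≤ p) {f : ℝ → X} (hf : Continuous f)
    {m : ℝ} (hm : 0 < m) :
    eLpNorm f p (volume.restrict (Ioc 0 (2 * m))) ≤
      ENNReal.ofReal (2 ^ p.toReal⁻¹) * eLpNorm f p (volume.restrict (Ioc 0 m)) +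
        omegaLp p (Ioi 0) f m := by
  have hcont2 : Continuous (fun y : ℝ => f (y + m)) :=
    hf.comp (continuous_id.add continuous_const)
  have hgc : Continuous (fun y : ℝ => f (y + m) - f y) := hcont2.sub hf
  have habs : |m| ≤ m := by rw [abs_of_pos hm]
  have hpre : (fun x : ℝ => x + m) ⁻¹' (Ioc m (2 * m)) = Ioc 0 m := by
    ext x
    simp only [Set.mem_preimage, Set.mem_Ioc]
    constructor <;> rintro ⟨h1, h2⟩ <;> constructor <;> linarith
  have hshift : eLpNorm (fun y : ℝ => f (y + m)) p (volume.restrict (Ioc 0 m)) =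
      eLpNorm f p (volume.restrict (Ioc m (2 * m))) := by
    rw [← hpre]; exact eLpNorm_shift p hf m measurableSet_Ioc
  have hΩ : eLpNorm (fun y : ℝ => f (y + m) - f y) p (volume.restrict (Ioc 0 m)) ≤
      omegaLp p (Ioi 0) f m := by
    have hsub : Ioc (0:ℝ) m ⊆ {s : ℝ | s ∈ Ioi 0 ∧ s + m ∈ Ioi 0} := by
      intro s hs
      have h1 : 0 < s := hs.1
      exact ⟨h1, by simp only [Set.mem_Ioi]; linarith⟩
    have h1 : eLpNorm (fun y : ℝ => f (y + m) - f y) p (volume.restrict (Ioc 0 m)) ≤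
        eLpNorm (fun y : ℝ => f (y + m) - f y) p
          (volume.restrict {s : ℝ | s ∈ Ioi 0 ∧ s + m ∈ Ioi 0}) :=
      eLpNorm_mono_measure _ (Measure.restrict_mono hsub le_rfl)
    exact h1.trans (le_iSup₂ (f := fun (h : ℝ) (_ : |h| ≤ m) =>
        eLpNorm (fun s => f (s + h) - f s) p
          (volume.restrict {s | s ∈ Ioi 0 ∧ s + h ∈ Ioi 0})) m habs)
  have hA : eLpNorm f p (volume.restrict (Ioc m (2 * m))) ≤
      eLpNorm f p (volume.restrict (Ioc 0 m)) + omegaLp p (Ioi 0) f m := by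
    rw [← hshift]
    have hdecomp : (fun y : ℝ => f (y + m)) = (fun y : ℝ => f (y + m) - f y) + f := by
      funext y; simp
    rw [hdecomp]
    refine le_trans (eLpNorm_add_le hgc.aestronglyMeasurable hf.aestronglyMeasurable hp1) ?_
    rw [add_comm]
    exact add_le_add_right hΩ _
  have hunion : Ioc (0 : ℝ) m ∪ Ioc m (2 * m) = Ioc 0 (2 * m) :=
    Set.Ioc_union_Ioc_eq_Ioc hm.le (by linarith)
  by_cases hptop : p = ∞
  · subst hptop
    simp only [ENNReal.toReal_top, _root_.inv_zero, Real.rpow_zero, ENNReal.ofReal_one, one_mul]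
    have hsplit : volume.restrict (Ioc (0 : ℝ) (2 * m)) =
        volume.restrict (Ioc (0 : ℝ) m) + volume.restrict (Ioc m (2 * m)) := by
      rw [← hunion, Measure.restrict_union (Set.Ioc_disjoint_Ioc_of_le le_rfl) measurableSet_Ioc]
    rw [eLpNorm_exponent_top, eLpNormEssSup, hsplit]
    set C0 : ℝ≥0∞ := eLpNorm f ⊤ (volume.restrict (Ioc (0 : ℝ) m)) + omegaLp ⊤ (Ioi 0) f m
      with hC0
    have hb1 : ∀ᵐ x ∂(volume.restrict (Ioc (0 : ℝ) m)), (‖f x‖₊ : ℝ≥0∞) ≤ C0 := by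
      refine (ENNReal.ae_le_essSup (fun x => (‖f x‖₊ : ℝ≥0∞))).mono fun x hx => ?_
      refine hx.trans ?_
      rw [hC0, eLpNorm_exponent_top, eLpNormEssSup]
      exact le_self_add
    have hb2 : ∀ᵐ x ∂(volume.restrict (Ioc m (2 * m))), (‖f x‖₊ : ℝ≥0∞) ≤ C0 := by
      refine (ENNReal.ae_le_essSup (fun x => (‖f x‖₊ : ℝ≥0∞))).mono fun x hx => ?_
      refine hx.trans ?_
      calc essSup (fun x => (‖f x‖₊ : ℝ≥0∞)) (volume.restrict (Ioc m (2 * m)))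
          = eLpNorm f ⊤ (volume.restrict (Ioc m (2 * m))) := by
            rw [eLpNorm_exponent_top, eLpNormEssSup]; rfl
        _ ≤ C0 := hA
    exact essSup_le_of_ae_le C0 (ae_add_measure_iff.2 ⟨hb1, hb2⟩)
  · have hp0 : p ≠ 0 := (zero_lt_one.trans_le hp1).ne'
    set q := p.toReal with hqdef
    have hq1 : 1 ≤ q := by
      rw [hqdef, ← ENNReal.toReal_one]
      exact ENNReal.toReal_mono hptop hp1
    have hq0 : 0 < q := lt_of_lt_of_le zero_lt_one hq1
    have hpow : ∀ I : ℝ≥0∞, (I ^ (1 / q)) ^ q = I := fun I => by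
      rw [← ENNReal.rpow_mul, one_div_mul_cancel hq0.ne', ENNReal.rpow_one]
    have hsplitInt : (∫⁻ x in Ioc (0 : ℝ) (2 * m), (‖f x‖₊ : ℝ≥0∞) ^ q ∂volume) =
        (∫⁻ x in Ioc (0 : ℝ) m, (‖f x‖₊ : ℝ≥0∞) ^ q ∂volume) +
          ∫⁻ x in Ioc m (2 * m), (‖f x‖₊ : ℝ≥0∞) ^ q ∂volume := by
      rw [← hunion, lintegral_union measurableSet_Ioc (Set.Ioc_disjoint_Ioc_of_le le_rfl)]
    have hc1 : (∫⁻ x in Ioc (0 : ℝ) m, (‖f x‖₊ : ℝ≥0∞) ^ q ∂volume) =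
        (eLpNorm f p (volume.restrict (Ioc 0 m))) ^ q := by
      simp only [eLpNorm_eq_lintegral_rpow_enorm_toReal hp0 hptop, enorm_eq_nnnorm]; rw [hpow]
    have hc2 : (∫⁻ x in Ioc m (2 * m), (‖f x‖₊ : ℝ≥0∞) ^ q ∂volume) =
        (eLpNorm f p (volume.restrict (Ioc m (2 * m)))) ^ q := by
      simp only [eLpNorm_eq_lintegral_rpow_enorm_toReal hp0 hptop, enorm_eq_nnnorm]; rw [hpow]
    have hcoef : ENNReal.ofReal (2 ^ q⁻¹) = (2 : ℝ≥0∞) ^ (1 / q) := by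
      rw [one_div, ← ENNReal.ofReal_rpow_of_pos (by norm_num : (0:ℝ) < 2)]
      norm_num
    calc eLpNorm f p (volume.restrict (Ioc 0 (2 * m)))
        = ((eLpNorm f p (volume.restrict (Ioc 0 m))) ^ q +
            (eLpNorm f p (volume.restrict (Ioc m (2 * m)))) ^ q) ^ (1 / q) := by
          rw [eLpNorm_eq_lintegral_rpow_enorm_toReal hp0 hptop]; simp only [enorm_eq_nnnorm]; rw [hsplitInt, hc1, hc2]
      _ ≤ ((eLpNorm f p (volume.restrict (Ioc 0 m))) ^ q +
            (eLpNorm f p (volume.restrict (Ioc 0 m)) + omegaLp p (Ioi 0) f m) ^ q) ^ (1 / q) := by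
          refine ENNReal.rpow_le_rpow (add_le_add_right ?_ _) (by positivity)
          exact ENNReal.rpow_le_rpow hA hq0.le
      _ ≤ (2 : ℝ≥0∞) ^ (1 / q) * eLpNorm f p (volume.restrict (Ioc 0 m)) +
            omegaLp p (Ioi 0) f m := ennreal_mink hq1 _ _
      _ = ENNReal.ofReal (2 ^ q⁻¹) * eLpNorm f p (volume.restrict (Ioc 0 m)) +
            omegaLp p (Ioi 0) f m := by rw [hcoef]

/-- Iterated dyadic estimate. -/
private lemma besov_iter (p : ℝ≥0∞) (hp1 : 1 ≤ p) {f : ℝ → X} (hf : Continuous f)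
    {r : ℝ} (hr : 0 < r) (n : ℕ) :
    eLpNorm f p (volume.restrict (Ioc 0 r)) ≤
      (ENNReal.ofReal (2 ^ p.toReal⁻¹)) ^ n * eLpNorm f p (volume.restrict (Ioc 0 (r / 2 ^ n))) +
        ∑ k ∈ Finset.range n,
          (ENNReal.ofReal (2 ^ p.toReal⁻¹)) ^ k * omegaLp p (Ioi 0) f (r / 2 ^ (k + 1)) := by
  induction n with
  | zero => simp
  | succ n ih =>
    have hm : 0 < r / 2 ^ (n + 1) := by positivity
    have h2m : 2 * (r / 2 ^ (n + 1)) = r / 2 ^ n := by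
      rw [pow_succ]; field_simp
    have hstep := besov_step p hp1 hf hm
    rw [h2m] at hstep
    calc eLpNorm f p (volume.restrict (Ioc 0 r))
        ≤ (ENNReal.ofReal (2 ^ p.toReal⁻¹)) ^ n *
            eLpNorm f p (volume.restrict (Ioc 0 (r / 2 ^ n))) +
          ∑ k ∈ Finset.range n,
            (ENNReal.ofReal (2 ^ p.toReal⁻¹)) ^ k * omegaLp p (Ioi 0) f (r / 2 ^ (k + 1)) := ih
      _ ≤ (ENNReal.ofReal (2 ^ p.toReal⁻¹)) ^ n *
            (ENNReal.ofReal (2 ^ p.toReal⁻¹) *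
              eLpNorm f p (volume.restrict (Ioc 0 (r / 2 ^ (n + 1)))) +
              omegaLp p (Ioi 0) f (r / 2 ^ (n + 1))) +
          ∑ k ∈ Finset.range n,
            (ENNReal.ofReal (2 ^ p.toReal⁻¹)) ^ k * omegaLp p (Ioi 0) f (r / 2 ^ (k + 1)) := by
          exact add_le_add_left (mul_le_mul_right hstep _) _
      _ = (ENNReal.ofReal (2 ^ p.toReal⁻¹)) ^ (n + 1) *
            eLpNorm f p (volume.restrict (Ioc 0 (r / 2 ^ (n + 1)))) +
          ∑ k ∈ Finset.range (n + 1),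
            (ENNReal.ofReal (2 ^ p.toReal⁻¹)) ^ k * omegaLp p (Ioi 0) f (r / 2 ^ (k + 1)) := by
          rw [Finset.sum_range_succ, pow_succ]
          ring

/-- The key boundary estimate: `‖f‖_{L^p(0,r)} ≲ r^α S`. -/
private lemma besov_boundary (p : ℝ≥0∞) (hp1 : 1 ≤ p) {α : ℝ} (hα : 0 < α)
    (hqα : p.toReal⁻¹ < α) {f : ℝ → X} (hf : Continuous f) (hf0 : ∀ x ≤ (0 : ℝ), f x = 0)
    {r : ℝ} (hr : 0 < r) :
    eLpNorm f p (volume.restrict (Ioc 0 r)) ≤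
      ENNReal.ofReal (r ^ α * (2 ^ (-α) * (1 - 2 ^ (p.toReal⁻¹ - α))⁻¹)) *
        ⨆ (t : ℝ) (_ : 0 < t), ENNReal.ofReal (t ^ (-α)) * omegaLp p (Ioi 0) f t := by
  set q : ℝ := p.toReal with hqdef
  set S : ℝ≥0∞ := ⨆ (t : ℝ) (_ : 0 < t), ENNReal.ofReal (t ^ (-α)) * omegaLp p (Ioi 0) f t
    with hS
  set ρ : ℝ := 2 ^ (q⁻¹ - α) with hρ
  have hρ0 : 0 < ρ := Real.rpow_pos_of_pos (by norm_num) _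
  have hρ1 : ρ < 1 := Real.rpow_lt_one_of_one_lt_of_neg (by norm_num) (by linarith)
  -- the real geometric computation
  have key : ∀ k : ℕ, ((2 : ℝ) ^ q⁻¹) ^ k * (r / 2 ^ (k + 1)) ^ α
      = r ^ α * 2 ^ (-α) * ρ ^ k := by
    intro k
    induction k with
    | zero =>
      simp only [pow_zero, one_mul, mul_one]
      rw [Real.div_rpow hr.le (by norm_num), Real.rpow_neg (by norm_num), div_eq_mul_inv]
      norm_num
    | succ k ih =>
      have e1 : (r / 2 ^ (k + 1 + 1) : ℝ) ^ α = (r / 2 ^ (k + 1)) ^ α / 2 ^ α := by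
        rw [show (r / 2 ^ (k + 1 + 1) : ℝ) = (r / 2 ^ (k + 1)) / 2 by rw [pow_succ]; ring,
          Real.div_rpow (by positivity) (by norm_num)]
      have e2 : ρ = 2 ^ q⁻¹ / 2 ^ α := by
        rw [hρ, Real.rpow_sub (by norm_num)]
      calc ((2:ℝ) ^ q⁻¹) ^ (k + 1) * (r / 2 ^ (k + 1 + 1)) ^ α
          = (((2:ℝ) ^ q⁻¹) ^ k * 2 ^ q⁻¹) * ((r / 2 ^ (k + 1)) ^ α / 2 ^ α) := by
            rw [pow_succ ((2:ℝ) ^ q⁻¹) k, e1]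
        _ = (((2:ℝ) ^ q⁻¹) ^ k * (r / 2 ^ (k + 1)) ^ α) * (2 ^ q⁻¹ / 2 ^ α) := by ring
        _ = (r ^ α * 2 ^ (-α) * ρ ^ k) * ρ := by rw [ih, e2]
        _ = r ^ α * 2 ^ (-α) * ρ ^ (k + 1) := by ring
  have hsum : ∀ n : ℕ, ∑ k ∈ Finset.range n, ((2 : ℝ) ^ q⁻¹) ^ k * (r / 2 ^ (k + 1)) ^ α
      ≤ r ^ α * (2 ^ (-α) * (1 - ρ)⁻¹) := by
    intro n
    have hgeom : ∑ k ∈ Finset.range n, ρ ^ k ≤ (1 - ρ)⁻¹ := by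
      have h1ρ : (0:ℝ) < 1 - ρ := by linarith
      have heq : (ρ ^ n - 1) / (ρ - 1) = (1 - ρ ^ n) / (1 - ρ) := by
        rw [← neg_div_neg_eq]; ring_nf
      rw [geom_sum_eq hρ1.ne n, heq, inv_eq_one_div]
      gcongr <;> nlinarith [pow_pos hρ0 n]
    calc ∑ k ∈ Finset.range n, ((2 : ℝ) ^ q⁻¹) ^ k * (r / 2 ^ (k + 1)) ^ α
        = ∑ k ∈ Finset.range n, r ^ α * 2 ^ (-α) * ρ ^ k := by
          exact Finset.sum_congr rfl fun k _ => key k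
      _ = r ^ α * 2 ^ (-α) * ∑ k ∈ Finset.range n, ρ ^ k := by
          rw [Finset.mul_sum]
      _ ≤ r ^ α * 2 ^ (-α) * (1 - ρ)⁻¹ := by
          refine mul_le_mul_of_nonneg_left hgeom (by positivity)
      _ = r ^ α * (2 ^ (-α) * (1 - ρ)⁻¹) := by ring
  -- now the ε-argument
  refine ENNReal.le_of_forall_pos_le_add fun ε hε _ => ?_
  have hrq : (0:ℝ) ≤ r ^ q⁻¹ := (Real.rpow_pos_of_pos hr _).le
  set ε' : ℝ := (ε : ℝ) / (r ^ q⁻¹ + 1) with hε'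
  have hε'0 : 0 < ε' := div_pos hε (by linarith)
  -- continuity at 0 gives a smallness scale
  have hf00 : f 0 = 0 := hf0 0 le_rfl
  obtain ⟨δ, hδ0, hδ⟩ := Metric.continuous_iff.mp hf 0 ε' hε'0
  obtain ⟨n, hn⟩ := pow_unbounded_of_one_lt (r / (δ / 2)) (by norm_num : (1:ℝ) < 2)
  have hrn : r / 2 ^ n ≤ δ / 2 := by
    rw [div_lt_iff₀ (by positivity)] at hn
    rw [div_le_iff₀ (by positivity)]
    nlinarith [pow_pos (by norm_num : (0:ℝ) < 2) n]
  -- tail estimate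
  have htail : (ENNReal.ofReal (2 ^ q⁻¹)) ^ n *
      eLpNorm f p (volume.restrict (Ioc 0 (r / 2 ^ n))) ≤ ε := by
    have hbound : ∀ᵐ x ∂(volume.restrict (Ioc (0:ℝ) (r / 2 ^ n))), ‖f x‖ ≤ ε' := by
      refine (ae_restrict_iff' measurableSet_Ioc).2 (ae_of_all _ fun x hx => ?_)
      have hx1 : 0 < x := hx.1
      have hx2 : x ≤ r / 2 ^ n := hx.2
      have hxd : dist x 0 < δ := by
        rw [Real.dist_eq, sub_zero, abs_of_pos hx1]
        have h2n : (0:ℝ) < 2 ^ n := by positivity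
        linarith
      have := hδ x hxd
      rw [hf00, dist_eq_norm, sub_zero] at this
      exact this.le
    have hD := eLpNorm_le_of_ae_bound (p := p) hbound
    have hμ : (volume.restrict (Ioc (0:ℝ) (r / 2 ^ n))) Set.univ = ENNReal.ofReal (r / 2 ^ n) := by
      rw [Measure.restrict_apply_univ, Real.volume_Ioc, sub_zero]
    rw [hμ] at hD
    have hm0 : (0:ℝ) < r / 2 ^ n := by positivity
    calc (ENNReal.ofReal (2 ^ q⁻¹)) ^ n *
        eLpNorm f p (volume.restrict (Ioc 0 (r / 2 ^ n)))
        ≤ (ENNReal.ofReal (2 ^ q⁻¹)) ^ n *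
            ((ENNReal.ofReal (r / 2 ^ n)) ^ q⁻¹ * ENNReal.ofReal ε') := mul_le_mul_right hD _
      _ = ENNReal.ofReal (((2:ℝ) ^ q⁻¹) ^ n * ((r / 2 ^ n) ^ q⁻¹ * ε')) := by
          rw [ENNReal.ofReal_rpow_of_pos hm0, ← ENNReal.ofReal_pow (by positivity),
            ← ENNReal.ofReal_mul (by positivity), ← ENNReal.ofReal_mul (by positivity)]
      _ ≤ ENNReal.ofReal (r ^ q⁻¹ * ε') := by
          refine ENNReal.ofReal_le_ofReal (le_of_eq ?_)
          have h1 : ((r / 2 ^ n : ℝ)) ^ q⁻¹ = r ^ q⁻¹ / ((2:ℝ) ^ n) ^ q⁻¹ :=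
            Real.div_rpow hr.le (by positivity) _
          have h2 : (((2:ℝ) ^ n)) ^ q⁻¹ = ((2:ℝ) ^ q⁻¹) ^ n := by
            rw [← Real.rpow_natCast ((2:ℝ) ^ q⁻¹) n, ← Real.rpow_natCast (2:ℝ) n,
              ← Real.rpow_mul (x := (2:ℝ)) (by norm_num),
              ← Real.rpow_mul (x := (2:ℝ)) (by norm_num), mul_comm]
          have h3 : (0:ℝ) < ((2:ℝ) ^ q⁻¹) ^ n := pow_pos (Real.rpow_pos_of_pos (by norm_num) _) n
          rw [h1, h2]
          field_simp
      _ ≤ ε := by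
          have hle : r ^ q⁻¹ * ε' ≤ (ε:ℝ) := by
            rw [hε', mul_comm, div_mul_eq_mul_div,
              div_le_iff₀ (by linarith : (0:ℝ) < r ^ q⁻¹ + 1)]
            nlinarith [ε.coe_nonneg]
          calc ENNReal.ofReal (r ^ q⁻¹ * ε') ≤ ENNReal.ofReal (ε:ℝ) :=
                ENNReal.ofReal_le_ofReal hle
            _ = (ε : ℝ≥0∞) := ENNReal.ofReal_coe_nnreal
  -- sum estimate
  have hsum2 : (∑ k ∈ Finset.range n,
      (ENNReal.ofReal (2 ^ q⁻¹)) ^ k * omegaLp p (Ioi 0) f (r / 2 ^ (k + 1))) ≤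
      ENNReal.ofReal (r ^ α * (2 ^ (-α) * (1 - ρ)⁻¹)) * S := by
    calc (∑ k ∈ Finset.range n,
        (ENNReal.ofReal (2 ^ q⁻¹)) ^ k * omegaLp p (Ioi 0) f (r / 2 ^ (k + 1)))
        ≤ ∑ k ∈ Finset.range n,
            (ENNReal.ofReal (2 ^ q⁻¹)) ^ k *
              (ENNReal.ofReal ((r / 2 ^ (k + 1)) ^ α) * S) := by
          refine Finset.sum_le_sum fun k _ => ?_
          exact mul_le_mul_right (omegaLp_le_rpow_mul p α f (by positivity)) _
      _ = (∑ k ∈ Finset.range n,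
            ENNReal.ofReal (((2:ℝ) ^ q⁻¹) ^ k * (r / 2 ^ (k + 1)) ^ α)) * S := by
          rw [Finset.sum_mul]
          refine Finset.sum_congr rfl fun k _ => ?_
          rw [← ENNReal.ofReal_pow (by positivity), ← mul_assoc,
            ← ENNReal.ofReal_mul (by positivity)]
      _ ≤ ENNReal.ofReal (r ^ α * (2 ^ (-α) * (1 - ρ)⁻¹)) * S := by
          refine mul_le_mul_left ?_ S
          rw [← ENNReal.ofReal_sum_of_nonneg fun k _ => by positivity]
          exact ENNReal.ofReal_le_ofReal (hsum n)
  calc eLpNorm f p (volume.restrict (Ioc 0 r))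
      ≤ (ENNReal.ofReal (2 ^ q⁻¹)) ^ n *
          eLpNorm f p (volume.restrict (Ioc 0 (r / 2 ^ n))) +
        ∑ k ∈ Finset.range n,
          (ENNReal.ofReal (2 ^ q⁻¹)) ^ k * omegaLp p (Ioi 0) f (r / 2 ^ (k + 1)) :=
        besov_iter p hp1 hf hr n
    _ ≤ ε + ENNReal.ofReal (r ^ α * (2 ^ (-α) * (1 - ρ)⁻¹)) * S := add_le_add htail hsum2
    _ = ENNReal.ofReal (r ^ α * (2 ^ (-α) * (1 - ρ)⁻¹)) * S + ε := add_comm _ _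

end Aux

/-- Extension by zero: for `αp > 1` there is `C` with
`‖f‖_{B^α_{p,∞}(ℝ;X)} ≤ C ‖f‖_{B^α_{p,∞}((0,∞);X)}` for continuous `f` vanishing on `(-∞,0]`. -/
theorem stmt15 {X : Type*} [NormedAddCommGroup X]
    (p : ℝ≥0∞) (hp : 1 < p) (α : ℝ) (hα : 0 < α) (hα1 : α < 1)
    (hαp : 1 < ENNReal.ofReal α * p) :
    ∃ C > (0:ℝ), ∀ f : ℝ → X, Continuous f → (∀ x ≤ (0:ℝ), f x = 0) →
      besovInftyNorm p α univ f ≤ ENNReal.ofReal C * besovInftyNorm p α (Ioi 0) f := by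
  have hp1 : 1 ≤ p := hp.le
  -- derive `p.toReal⁻¹ < α`
  have hqα : p.toReal⁻¹ < α := by
    by_cases hptop : p = ∞
    · simpa [hptop] using hα
    · have hne : ENNReal.ofReal α * p ≠ ∞ := ENNReal.mul_ne_top ENNReal.ofReal_ne_top hptop
      have h1 : (1 : ℝ) < (ENNReal.ofReal α * p).toReal := by
        rw [← ENNReal.toReal_one]
        exact (ENNReal.toReal_lt_toReal ENNReal.one_ne_top hne).2 hαp
      rw [ENNReal.toReal_mul, ENNReal.toReal_ofReal hα.le] at h1
      have hpt : 0 < p.toReal := by nlinarith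
      rw [inv_lt_iff_one_lt_mul₀ hpt]
      linarith [mul_comm α p.toReal]
  set K : ℝ := 2 ^ (-α) * (1 - 2 ^ (p.toReal⁻¹ - α))⁻¹ with hK
  have hρ1 : (2:ℝ) ^ (p.toReal⁻¹ - α) < 1 :=
    Real.rpow_lt_one_of_one_lt_of_neg (by norm_num) (by linarith)
  have hρ0 : (0:ℝ) < 2 ^ (p.toReal⁻¹ - α) := Real.rpow_pos_of_pos (by norm_num) _
  have hK0 : 0 < K := by
    apply mul_pos (Real.rpow_pos_of_pos (by norm_num) _)
    exact inv_pos.2 (by linarith)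
  refine ⟨2 * K + 1, by positivity, fun f hf hf0 => ?_⟩
  set S : ℝ≥0∞ := ⨆ (t : ℝ) (_ : 0 < t), ENNReal.ofReal (t ^ (-α)) * omegaLp p (Ioi 0) f t
    with hS
  set L : ℝ≥0∞ := eLpNorm f p (volume.restrict (Ioi 0)) with hL
  have hCge1 : (1 : ℝ≥0∞) ≤ ENNReal.ofReal (2 * K + 1) := by
    rw [ENNReal.one_le_ofReal]; linarith
  -- indicator identity
  have hfind : ∀ x : ℝ, f x = (Ioi (0:ℝ)).indicator f x := by
    intro x
    by_cases hx : 0 < x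
    · simp [Set.indicator_of_mem, hx]
    · rw [Set.indicator_of_notMem (by simpa using hx), hf0 x (le_of_not_gt hx)]
  -- the L^p parts agree
  have hLp : eLpNorm f p (volume.restrict (univ : Set ℝ)) = L := by
    rw [Measure.restrict_univ]
    calc eLpNorm f p volume = eLpNorm ((Ioi (0:ℝ)).indicator f) p volume :=
          eLpNorm_congr_ae (ae_of_all _ hfind)
      _ = L := eLpNorm_indicator_eq_eLpNorm_restrict measurableSet_Ioi
  -- main seminorm estimate
  have hboundary : ∀ {t : ℝ}, 0 < t →
      eLpNorm f p (volume.restrict (Ioc 0 t)) ≤ ENNReal.ofReal (t ^ α * K) * S := by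
    intro t ht
    have h := besov_boundary p hp1 hα hqα hf hf0 ht
    rw [← hK] at h
    exact h.trans_eq (by rw [hS])
  have hsup : (⨆ (t : ℝ) (_ : 0 < t), ENNReal.ofReal (t ^ (-α)) * omegaLp p univ f t) ≤
      ENNReal.ofReal (2 * K + 1) * S := by
    refine iSup₂_le fun t ht => ?_
    have homega : omegaLp p univ f t = ⨆ (h : ℝ) (_ : |h| ≤ t),
        eLpNorm (fun s => f (s + h) - f s) p volume := by
      rw [omegaLp]
      refine iSup_congr fun h => iSup_congr fun _ => ?_
      have hset : {s : ℝ | s ∈ (univ : Set ℝ) ∧ s + h ∈ (univ : Set ℝ)} = univ := by simp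
      rw [hset, Measure.restrict_univ]
    rw [homega, ENNReal.mul_iSup]
    refine iSup_le fun h => ?_
    rw [ENNReal.mul_iSup]
    refine iSup_le fun hht => ?_
    -- fixed shift h with |h| ≤ t
    have hg : Continuous (fun s : ℝ => f (s + h) - f s) :=
      (hf.comp (continuous_id.add continuous_const)).sub hf
    have homegat : ∀ {h' : ℝ}, |h'| ≤ t →
        eLpNorm (fun s => f (s + h') - f s) p
          (volume.restrict {s : ℝ | s ∈ Ioi 0 ∧ s + h' ∈ Ioi 0}) ≤ omegaLp p (Ioi 0) f t :=
      fun {h'} hh' => le_iSup₂ (f := fun (h'' : ℝ) (_ : |h''| ≤ t) =>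
        eLpNorm (fun s => f (s + h'') - f s) p
          (volume.restrict {s : ℝ | s ∈ Ioi 0 ∧ s + h'' ∈ Ioi 0})) h' hh'
    have hgsplit : (fun s : ℝ => f (s + h) - f s) =
        (Iic (0:ℝ)).indicator (fun s : ℝ => f (s + h) - f s) +
          (Ioi (0:ℝ)).indicator (fun s : ℝ => f (s + h) - f s) := by
      funext x
      simp only [Pi.add_apply]
      by_cases hx : x ≤ 0
      · rw [Set.indicator_of_mem (Set.mem_Iic.2 hx),
          Set.indicator_of_notMem (by simpa using not_lt.2 hx), add_zero]
      · push_neg at hx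
        rw [Set.indicator_of_notMem (by simpa using hx.not_ge),
          Set.indicator_of_mem (Set.mem_Ioi.2 hx), zero_add]
    have hE : eLpNorm (fun s : ℝ => f (s + h) - f s) p volume ≤
        eLpNorm (fun s : ℝ => f (s + h) - f s) p (volume.restrict (Iic 0)) +
          eLpNorm (fun s : ℝ => f (s + h) - f s) p (volume.restrict (Ioi 0)) := by
      conv_lhs => rw [hgsplit]
      refine le_trans (eLpNorm_add_le (hg.aestronglyMeasurable.indicator measurableSet_Iic)
        (hg.aestronglyMeasurable.indicator measurableSet_Ioi) hp1) ?_
      rw [eLpNorm_indicator_eq_eLpNorm_restrict measurableSet_Iic,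
        eLpNorm_indicator_eq_eLpNorm_restrict measurableSet_Ioi]
    have hB1 : eLpNorm (fun s : ℝ => f (s + h) - f s) p (volume.restrict (Iic 0)) ≤
        ENNReal.ofReal (t ^ α * K) * S := by
      rcases le_or_gt 0 h with hh | hh
      · have hcongr : (fun s : ℝ => f (s + h) - f s) =ᵐ[volume.restrict (Iic 0)]
            (fun s : ℝ => f (s + h)) := by
          refine (ae_restrict_iff' measurableSet_Iic).2 (ae_of_all _ fun x hx => ?_)
          show f (x + h) - f x = f (x + h)
          rw [hf0 x (Set.mem_Iic.1 hx), sub_zero]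
        rw [eLpNorm_congr_ae hcongr]
        have hpre : (fun x : ℝ => x + h) ⁻¹' (Iic h) = Iic (0:ℝ) := by
          ext x; simp
        rw [← hpre, eLpNorm_shift p hf h measurableSet_Iic]
        calc eLpNorm f p (volume.restrict (Iic h))
            = eLpNorm ((Ioi (0:ℝ)).indicator f) p (volume.restrict (Iic h)) :=
              eLpNorm_congr_ae (ae_of_all _ hfind)
          _ = eLpNorm f p ((volume.restrict (Iic h)).restrict (Ioi 0)) :=
              eLpNorm_indicator_eq_eLpNorm_restrict measurableSet_Ioi
          _ = eLpNorm f p (volume.restrict (Ioc 0 h)) := by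
              rw [Measure.restrict_restrict measurableSet_Ioi, Set.Ioi_inter_Iic]
          _ ≤ eLpNorm f p (volume.restrict (Ioc 0 t)) :=
              eLpNorm_mono_measure _ (Measure.restrict_mono
                (Set.Ioc_subset_Ioc_right ((le_abs_self h).trans hht)) le_rfl)
          _ ≤ ENNReal.ofReal (t ^ α * K) * S := hboundary ht
      · have hcongr : (fun s : ℝ => f (s + h) - f s) =ᵐ[volume.restrict (Iic 0)]
            (fun _ : ℝ => (0:X)) := by
          refine (ae_restrict_iff' measurableSet_Iic).2 (ae_of_all _ fun x hx => ?_)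
          have hx0 : x ≤ 0 := Set.mem_Iic.1 hx
          show f (x + h) - f x = 0
          rw [hf0 x hx0, hf0 (x + h) (by linarith), sub_zero]
        rw [eLpNorm_congr_ae hcongr]
        simp
    have hB2 : eLpNorm (fun s : ℝ => f (s + h) - f s) p (volume.restrict (Ioi 0)) ≤
        ENNReal.ofReal (t ^ α * K) * S + omegaLp p (Ioi 0) f t := by
      rcases le_or_gt 0 h with hh | hh
      · have hsub : Ioi (0:ℝ) ⊆ {s : ℝ | s ∈ Ioi 0 ∧ s + h ∈ Ioi 0} := fun s hs =>
          ⟨hs, by simp only [Set.mem_Ioi] at *; linarith⟩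
        exact le_trans (le_trans (eLpNorm_mono_measure _ (Measure.restrict_mono hsub le_rfl))
          (homegat hht)) (self_le_add_left _ _)
      · set h' : ℝ := -h with hh'def
        have hh'0 : 0 < h' := by rw [hh'def]; linarith
        have hh't : h' ≤ t := (neg_le_abs h).trans hht
        have hgsplit2 : (fun s : ℝ => f (s + h) - f s) =
            (Iic h').indicator (fun s : ℝ => f (s + h) - f s) +
              (Ioi h').indicator (fun s : ℝ => f (s + h) - f s) := by
          funext x
          simp only [Pi.add_apply]
          by_cases hx : x ≤ h'
          · rw [Set.indicator_of_mem (Set.mem_Iic.2 hx),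
              Set.indicator_of_notMem (by simpa using not_lt.2 hx), add_zero]
          · push_neg at hx
            rw [Set.indicator_of_notMem (by simpa using hx.not_ge),
              Set.indicator_of_mem (Set.mem_Ioi.2 hx), zero_add]
        conv_lhs => rw [hgsplit2]
        refine le_trans (eLpNorm_add_le (hg.aestronglyMeasurable.indicator measurableSet_Iic)
          (hg.aestronglyMeasurable.indicator measurableSet_Ioi) hp1) ?_
        rw [eLpNorm_indicator_eq_eLpNorm_restrict measurableSet_Iic,
          eLpNorm_indicator_eq_eLpNorm_restrict measurableSet_Ioi,
          Measure.restrict_restrict measurableSet_Iic,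
          Measure.restrict_restrict measurableSet_Ioi,
          show Iic h' ∩ Ioi 0 = Ioc 0 h' by rw [Set.inter_comm, Set.Ioi_inter_Iic],
          show Ioi h' ∩ Ioi 0 = Ioi h' from
            Set.inter_eq_self_of_subset_left (fun x hx => lt_trans hh'0 hx)]
        refine add_le_add ?_ ?_
        · have hcongr2 : (fun s : ℝ => f (s + h) - f s) =ᵐ[volume.restrict (Ioc 0 h')]
              (fun s : ℝ => -f s) := by
            refine (ae_restrict_iff' measurableSet_Ioc).2 (ae_of_all _ fun x hx => ?_)
            have hx2 : x ≤ h' := hx.2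
            show f (x + h) - f x = -f x
            rw [hf0 (x + h) (by rw [hh'def] at hx2; linarith), zero_sub]
          rw [eLpNorm_congr_ae hcongr2]
          have hneg : eLpNorm (fun s : ℝ => -f s) p (volume.restrict (Ioc 0 h')) =
              eLpNorm f p (volume.restrict (Ioc 0 h')) := eLpNorm_neg f p _
          rw [hneg]
          refine le_trans (eLpNorm_mono_measure _ (Measure.restrict_mono
            (Set.Ioc_subset_Ioc_right hh't) le_rfl)) (hboundary ht)
        · have hsub : Ioi h' ⊆ {s : ℝ | s ∈ Ioi 0 ∧ s + h ∈ Ioi 0} := by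
            intro s hs
            have hs1 : h' < s := hs
            rw [hh'def] at hs1
            exact ⟨Set.mem_Ioi.2 (by linarith), Set.mem_Ioi.2 (by linarith)⟩
          exact le_trans (eLpNorm_mono_measure _ (Measure.restrict_mono hsub le_rfl))
            (homegat hht)
    have hωS : ENNReal.ofReal (t ^ (-α)) * omegaLp p (Ioi 0) f t ≤ S := by
      rw [hS]
      exact le_iSup₂ (f := fun (t' : ℝ) (_ : 0 < t') =>
        ENNReal.ofReal (t' ^ (-α)) * omegaLp p (Ioi 0) f t') t ht
    have htα : ENNReal.ofReal (t ^ (-α)) * (ENNReal.ofReal (t ^ α * K) * S) =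
        ENNReal.ofReal K * S := by
      rw [← mul_assoc, ← ENNReal.ofReal_mul (by positivity)]
      congr 2
      rw [← mul_assoc, ← Real.rpow_add ht]
      simp
    calc ENNReal.ofReal (t ^ (-α)) * eLpNorm (fun s => f (s + h) - f s) p volume
        ≤ ENNReal.ofReal (t ^ (-α)) * (ENNReal.ofReal (t ^ α * K) * S +
            (ENNReal.ofReal (t ^ α * K) * S + omegaLp p (Ioi 0) f t)) :=
          mul_le_mul_right (le_trans hE (add_le_add hB1 hB2)) _
      _ = ENNReal.ofReal K * S + (ENNReal.ofReal K * S +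
            ENNReal.ofReal (t ^ (-α)) * omegaLp p (Ioi 0) f t) := by
          rw [mul_add, mul_add, htα]
      _ ≤ ENNReal.ofReal K * S + (ENNReal.ofReal K * S + S) :=
          add_le_add_right (add_le_add_right hωS _) _
      _ = (ENNReal.ofReal K + ENNReal.ofReal K + 1) * S := by ring
      _ = ENNReal.ofReal (2 * K + 1) * S := by
          rw [← ENNReal.ofReal_one, ← ENNReal.ofReal_add hK0.le hK0.le,
            ← ENNReal.ofReal_add (by positivity) (by norm_num)]
          norm_num
          ring_nf
  -- final assembly
  simp only [besovInftyNorm]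
  rw [hLp, ← hS]
  calc L + (⨆ (t : ℝ) (_ : 0 < t), ENNReal.ofReal (t ^ (-α)) * omegaLp p univ f t)
      ≤ ENNReal.ofReal (2 * K + 1) * L + ENNReal.ofReal (2 * K + 1) * S :=
        add_le_add (le_mul_of_one_le_left (by positivity) hCge1) hsup
    _ = ENNReal.ofReal (2 * K + 1) * (L + S) := by rw [mul_add]
end
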